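/- arXiv:2103.05097 — 8 statements merged into one kernel-verified Lean document; each statement's English description precedes it below -/
import Mathlib

section
/- Let X be a separable real Banach space of dimension greater than 1. Then add(X) = ℵ₁, non(X) = ℵ₁, cov(X) = 𝔠 (the cardinality of the continuum), and cof(X) = 𝔠. -/
open Cardinal Set

universe u v

noncomputable section

/-- A hyperplane of a normed space: the kernel of a nonzero continuous linear functional. -/
def IsHyperplane {X : Type u} [NormedAddCommGroup X] [NormedSpace ℝ X] (H : Set X) : Prop :=
  ∃ f : X →L[ℝ] ℝ, f ≠ 0 ∧ H = {x | f x = 0}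

/-- Member of the σ-ideal generated by hyperplanes: covered by countably many hyperplanes. -/
def InHyperplaneIdeal {X : Type u} [NormedAddCommGroup X] [NormedSpace ℝ X] (Y : Set X) : Prop :=
  ∃ F : Set (Set X), F.Countable ∧ (∀ H ∈ F, IsHyperplane H) ∧ Y ⊆ ⋃₀ F

/-- Additivity of the hyperplane σ-ideal. -/
def addH (X : Type u) [NormedAddCommGroup X] [NormedSpace ℝ X] : Cardinal.{u} :=
  sInf {c | ∃ F : Set (Set X), (∀ A ∈ F, InHyperplaneIdeal A) ∧
    ¬ InHyperplaneIdeal (⋃₀ F) ∧ #F = c}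

/-- Covering number of the hyperplane σ-ideal. -/
def covH (X : Type u) [NormedAddCommGroup X] [NormedSpace ℝ X] : Cardinal.{u} :=
  sInf {c | ∃ F : Set (Set X), (∀ A ∈ F, InHyperplaneIdeal A) ∧ ⋃₀ F = Set.univ ∧ #F = c}

/-- Uniformity of the hyperplane σ-ideal. -/
def nonH (X : Type u) [NormedAddCommGroup X] [NormedSpace ℝ X] : Cardinal.{u} :=
  sInf {c | ∃ Y : Set X, ¬ InHyperplaneIdeal Y ∧ #Y = c}

/-- Cofinality of the hyperplane σ-ideal. -/
def cofH (X : Type u) [NormedAddCommGroup X] [NormedSpace ℝ X] : Cardinal.{u} :=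
  sInf {c | ∃ F : Set (Set X), (∀ A ∈ F, InHyperplaneIdeal A) ∧
    (∀ Y : Set X, InHyperplaneIdeal Y → ∃ A ∈ F, Y ⊆ A) ∧ #F = c}

/-- Density of a topological space: least cardinality of a dense subset. -/
def densH (X : Type u) [TopologicalSpace X] : Cardinal.{u} :=
  sInf {c | ∃ D : Set X, Dense D ∧ #D = c}

/-- `cf([κ]^ω)`: least cardinality of a cofinal family of countable subsets of κ. -/
def cfCtblSubsets (κ : Cardinal.{u}) : Cardinal.{u} :=
  sInf {c | ∃ F : Set (Set κ.out), (∀ S ∈ F, S.Countable) ∧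
    (∀ S : Set κ.out, S.Countable → ∃ T ∈ F, S ⊆ T) ∧ #F = c}

/-- A compact space has small diagonal. -/
def HasSmallDiagonal (K : Type u) [TopologicalSpace K] : Prop :=
  ∀ A : Set (K × K), #A = Cardinal.aleph 1 → A ∩ Set.diagonal K = ∅ →
    ∃ B ⊆ A, ¬ B.Countable ∧ closure B ∩ Set.diagonal K = ∅

/-- A topological space is scattered. -/
def IsScattered (K : Type u) [TopologicalSpace K] : Prop :=
  ∀ S : Set K, S.Nonempty → ∃ x ∈ S, ∃ U : Set K, IsOpen U ∧ U ∩ S = {x}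


open Filter Topology

lemma countable_of_isolated {α : Type v} [TopologicalSpace α]
    [SecondCountableTopology α]
    {s : Set α} (h : ∀ x ∈ s, ¬ ∃ᶠ y in 𝓝[≠] x, y ∈ s) : s.Countable := by
  have key : ∀ x : s, ∃ b ∈ TopologicalSpace.countableBasis α,
      (x : α) ∈ b ∧ ∀ y ∈ b, y ∈ s → y = (x : α) := by
    rintro ⟨x, hx⟩
    have h1 : ∀ᶠ y in 𝓝[≠] x, y ∉ s := by
      have := h x hx
      rwa [Filter.not_frequently] at this
    rw [eventually_nhdsWithin_iff] at h1
    obtain ⟨t, htx, hts⟩ := h1.exists_mem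
    obtain ⟨b, hbB, hxb, hbt⟩ :=
      (TopologicalSpace.isBasis_countableBasis α).mem_nhds_iff.mp htx
    refine ⟨b, hbB, hxb, fun y hy hys => ?_⟩
    by_contra hne
    exact (hts y (hbt hy)) hne hys
  choose b hbB hxb hb using key
  have hinj : Function.Injective b := by
    intro x y hxy
    have := hb y x (by rw [← hxy]; exact hxb x) x.2
    exact Subtype.ext this
  have : Countable (↥(TopologicalSpace.countableBasis α)) :=
    (TopologicalSpace.countable_countableBasis α).to_subtype
  have : Function.Injective (fun x : s => (⟨b x, hbB x⟩ : ↥(TopologicalSpace.countableBasis α))) :=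
    fun x y hxy => hinj (congrArg Subtype.val hxy)
  have : Countable s := this.countable
  exact Set.countable_coe_iff.mp this


lemma exists_big_set (X : Type u) [NormedAddCommGroup X] [NormedSpace ℝ X] [CompleteSpace X]
    [TopologicalSpace.SeparableSpace X] [Nontrivial X] :
    ∃ C : Set X, Cardinal.continuum ≤ #C ∧
      ∀ f : X →L[ℝ] ℝ, f ≠ 0 → {x ∈ C | f x = 0}.Countable := by
  obtain ⟨d, hd⟩ := TopologicalSpace.exists_dense_seq X
  set c : ℕ → ℝ := fun n => (2⁻¹ : ℝ)^n / (1 + ‖d n‖) with hc_def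
  have hdpos : ∀ n : ℕ, (0:ℝ) < 1 + ‖d n‖ := fun n => by positivity
  have hc_pos : ∀ n, 0 < c n := fun n => div_pos (pow_pos (by norm_num) n) (hdpos n)
  have hc_le : ∀ n, c n * ‖d n‖ ≤ (2⁻¹ : ℝ)^n := by
    intro n
    rw [hc_def, div_mul_eq_mul_div, div_le_iff₀ (hdpos n)]
    have h1 : (0:ℝ) ≤ (2⁻¹:ℝ)^n := by positivity
    nlinarith [norm_nonneg (d n)]
  set v : ℝ → ℕ → X := fun t n => (t^(n+1) * c n) • d n with hv_def
  have hvnorm : ∀ t : ℝ, |t| ≤ 1 → ∀ n, ‖v t n‖ ≤ (2⁻¹:ℝ)^n := by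
    intro t ht n
    have h0 : ‖v t n‖ = |t|^(n+1) * (c n * ‖d n‖) := by
      rw [hv_def]
      simp only [norm_smul, Real.norm_eq_abs, abs_mul, abs_pow,
        abs_of_pos (hc_pos n)]
      ring
    rw [h0]
    have h1 : |t|^(n+1) ≤ 1 := pow_le_one₀ (abs_nonneg t) ht
    have h2 : 0 ≤ c n * ‖d n‖ := mul_nonneg (hc_pos n).le (norm_nonneg _)
    calc |t|^(n+1) * (c n * ‖d n‖) ≤ 1 * (c n * ‖d n‖) :=
          mul_le_mul_of_nonneg_right h1 h2
      _ = c n * ‖d n‖ := one_mul _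
      _ ≤ (2⁻¹:ℝ)^n := hc_le n
  have hsum : ∀ t : ℝ, |t| ≤ 1 → Summable (v t) := by
    intro t ht
    exact Summable.of_norm_bounded (summable_geometric_of_lt_one (by norm_num) (by norm_num))
      (hvnorm t ht)
  set γ : ℝ → X := fun t => ∑' n, v t n with hγ_def
  have keyA : ∀ f : X →L[ℝ] ℝ, f ≠ 0 → ∀ r : ℝ,
      {t ∈ Ioo (-1:ℝ) 1 | f (γ t) = r}.Countable := by
    intro f hf r
    set a : ℕ → ℝ := fun n => Nat.rec (0:ℝ) (fun m _ => c m * f (d m)) n with ha_def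
    have ha0 : a 0 = 0 := rfl
    have haS : ∀ m, a (m+1) = c m * f (d m) := fun m => rfl
    have ha : ∀ n, |a n| ≤ (2 * ‖f‖) * (2⁻¹:ℝ)^n := by
      intro n
      cases n with
      | zero => simp only [ha0, abs_zero]; positivity
      | succ m =>
        rw [haS m, abs_mul, abs_of_pos (hc_pos m)]
        have h1 : |f (d m)| ≤ ‖f‖ * ‖d m‖ := f.le_opNorm (d m)
        have h2 : c m * |f (d m)| ≤ c m * (‖f‖ * ‖d m‖) :=
          mul_le_mul_of_nonneg_left h1 (hc_pos m).le
        have h3 : c m * (‖f‖ * ‖d m‖) = ‖f‖ * (c m * ‖d m‖) := by ring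
        have h4 : ‖f‖ * (c m * ‖d m‖) ≤ ‖f‖ * (2⁻¹:ℝ)^m :=
          mul_le_mul_of_nonneg_left (hc_le m) (norm_nonneg f)
        have h5 : ‖f‖ * (2⁻¹:ℝ)^m = (2 * ‖f‖) * (2⁻¹:ℝ)^(m+1) := by ring
        linarith
    set p := FormalMultilinearSeries.ofScalars ℝ a with hp_def
    have hpnorm : ∀ n, ‖p n‖ = |a n| := by
      intro n
      rw [hp_def, FormalMultilinearSeries.ofScalars_norm, Real.norm_eq_abs]
    have hrad : ((3/2 : NNReal) : ENNReal) ≤ p.radius := by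
      apply p.le_radius_of_bound (2 * ‖f‖)
      intro n
      have hr : ((3/2 : NNReal) : ℝ) = 3/2 := by norm_num
      rw [hpnorm, hr]
      have h1 : |a n| * (3/2)^n ≤ ((2 * ‖f‖) * (2⁻¹:ℝ)^n) * (3/2)^n :=
        mul_le_mul_of_nonneg_right (ha n) (by positivity)
      have h2 : ((2 * ‖f‖) * (2⁻¹:ℝ)^n) * (3/2)^n = (2 * ‖f‖) * (3/4:ℝ)^n := by
        rw [mul_assoc, ← mul_pow]; norm_num
      have h3 : (3/4:ℝ)^n ≤ 1 := pow_le_one₀ (by norm_num) (by norm_num)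
      have h4 : (2 * ‖f‖) * (3/4:ℝ)^n ≤ (2 * ‖f‖) * 1 :=
        mul_le_mul_of_nonneg_left h3 (by positivity)
      linarith
    have hradpos : (0:ENNReal) < p.radius :=
      lt_of_lt_of_le (by norm_num) hrad
    have hball : HasFPowerSeriesOnBall p.sum p 0 ((3/2 : NNReal) : ENNReal) :=
      (p.hasFPowerSeriesOnBall hradpos).mono (by norm_num) hrad
    have heq : ∀ t ∈ Ioo (-1:ℝ) 1, f (γ t) = p.sum t := by
      intro t ht
      have habs : |t| ≤ 1 := by
        rw [abs_le]; exact ⟨ht.1.le, ht.2.le⟩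
      have hbsum : Summable (fun n => a n * t^n) := by
        apply Summable.of_norm_bounded
          ((summable_geometric_of_lt_one (by norm_num : (0:ℝ) ≤ 2⁻¹)
            (by norm_num)).mul_left (2 * ‖f‖))
        intro n
        rw [Real.norm_eq_abs, abs_mul, abs_pow]
        have h1 : |t|^n ≤ 1 := pow_le_one₀ (abs_nonneg t) habs
        calc |a n| * |t|^n ≤ |a n| * 1 := mul_le_mul_of_nonneg_left h1 (abs_nonneg _)
          _ = |a n| := mul_one _
          _ ≤ (2 * ‖f‖) * (2⁻¹:ℝ)^n := ha n
      have h1 : f (γ t) = ∑' n, f (v t n) := f.map_tsum (hsum t habs)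
      have h2 : p.sum t = ∑' n, a n * t^n := by
        rw [FormalMultilinearSeries.sum]
        apply tsum_congr
        intro n
        rw [hp_def, FormalMultilinearSeries.ofScalars_apply_eq, smul_eq_mul]
      have h3 : ∑' n, a n * t^n = a 0 * t^0 + ∑' n, a (n+1) * t^(n+1) :=
        hbsum.tsum_eq_zero_add
      have h4 : ∀ n : ℕ, f (v t n) = a (n+1) * t^(n+1) := by
        intro n
        rw [hv_def]
        simp only [map_smul, smul_eq_mul, haS]
        ring
      rw [h1, h2, h3, ha0]
      simp only [zero_mul, zero_add]
      exact tsum_congr h4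
    set Z := {t ∈ Ioo (-1:ℝ) 1 | f (γ t) = r} with hZ_def
    by_cases hiso : ∀ x ∈ Z, ¬ ∃ᶠ y in 𝓝[≠] x, y ∈ Z
    · exact countable_of_isolated hiso
    · exfalso
      push_neg at hiso
      obtain ⟨z₀, hz₀Z, hfz⟩ := hiso
      set U := Metric.eball (0:ℝ) ((3/2 : NNReal) : ENNReal) with hU_def
      have hU_eq : U = Metric.ball (0:ℝ) ((3/2 : NNReal) : ℝ) := by
        rw [hU_def, Metric.emetric_ball_nnreal]
      have hmemU : ∀ w : ℝ, |w| ≤ 1 → w ∈ U := by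
        intro w hw
        rw [hU_eq, Metric.mem_ball, Real.dist_eq, sub_zero]
        have : ((3/2 : NNReal) : ℝ) = 3/2 := by norm_num
        rw [this]; linarith [hw]
      have hUopen : IsOpen U := EMetric.isOpen_ball
      have hUpre : IsPreconnected U := by
        rw [hU_eq]; exact (convex_ball _ _).isPreconnected
      have han : AnalyticOnNhd ℝ (fun w => p.sum w - r) U :=
        (hball.analyticOnNhd).sub analyticOnNhd_const
      have hz₀U : z₀ ∈ U := by
        apply hmemU
        have : z₀ ∈ Ioo (-1:ℝ) 1 := hz₀Z.1
        rw [abs_le]; exact ⟨this.1.le, this.2.le⟩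
      have hfreq : ∃ᶠ z in 𝓝[≠] z₀, (fun w => p.sum w - r) z = 0 := by
        apply hfz.mono
        intro z hz
        have h1 : f (γ z) = p.sum z := heq z hz.1
        have h2 : f (γ z) = r := hz.2
        simp only [h1 ▸ h2, sub_self]
      have hEq : EqOn (fun w => p.sum w - r) 0 U :=
        han.eqOn_zero_of_preconnected_of_frequently_eq_zero hUpre hz₀U hfreq
      have hev : p.sum =ᶠ[𝓝 (0:ℝ)] fun _ => r := by
        filter_upwards [hUopen.mem_nhds (hmemU 0 (by norm_num))] with w hw
        have := hEq hw
        simp only [Pi.zero_apply] at this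
        linarith [this]
      have hconst : HasFPowerSeriesAt p.sum (constFormalMultilinearSeries ℝ ℝ r) 0 :=
        hasFPowerSeriesAt_const.congr hev.symm
      have hpc : p = constFormalMultilinearSeries ℝ ℝ r :=
        (hball.hasFPowerSeriesAt).eq_formalMultilinearSeries hconst
      have hfd : ∀ m : ℕ, f (d m) = 0 := by
        intro m
        have h1 : p (m+1) = 0 := by
          rw [hpc]; exact constFormalMultilinearSeries_apply_of_nonzero (Nat.succ_ne_zero m)
        have h2 : a (m+1) = 0 := by
          rw [hp_def] at h1
          exact (FormalMultilinearSeries.ofScalars_eq_zero ℝ (m+1)).mp h1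
        rw [haS] at h2
        rcases mul_eq_zero.mp h2 with h | h
        · exact absurd h (ne_of_gt (hc_pos m))
        · exact h
      apply hf
      have hfzero : (⇑f) = fun _ => (0:ℝ) := by
        apply Continuous.ext_on hd f.continuous continuous_const
        rintro _ ⟨n, rfl⟩
        exact hfd n
      ext x
      have := congrFun hfzero x
      simpa using this
  refine ⟨γ '' Ioo (-1:ℝ) 1, ?_, ?_⟩
  · -- continuum ≤ #C
    obtain ⟨x₀, hx₀⟩ := exists_ne (0:X)
    obtain ⟨f₀, hf₀1⟩ := SeparatingDual.exists_eq_one (R := ℝ) hx₀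
    have hf₀ : f₀ ≠ 0 := by
      intro h
      rw [h] at hf₀1
      simp at hf₀1
    set C := γ '' Ioo (-1:ℝ) 1 with hC_def
    set F : X → Set ℝ := fun y => {t ∈ Ioo (-1:ℝ) 1 | γ t = y} with hF_def
    have hFc : ∀ y : X, Cardinal.lift.{u} #(F y) ≤ ℵ₀ := by
      intro y
      have h1 : (F y).Countable := by
        apply (keyA f₀ hf₀ (f₀ y)).mono
        rintro t ⟨ht, hty⟩
        exact ⟨ht, by rw [hty]⟩
      have h2 : #(F y) ≤ ℵ₀ := by
        rw [Cardinal.mk_le_aleph0_iff]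
        exact h1.to_subtype
      calc Cardinal.lift.{u} #(F y) ≤ Cardinal.lift.{u} ℵ₀ := Cardinal.lift_le.mpr h2
        _ = ℵ₀ := Cardinal.lift_aleph0
    have hcover : Ioo (-1:ℝ) 1 ⊆ ⋃ y ∈ C, F y := by
      intro t ht
      exact mem_biUnion ⟨t, ht, rfl⟩ ⟨ht, rfl⟩
    by_contra hlt
    push_neg at hlt
    have hCne : Nonempty ↥C := Set.Nonempty.to_subtype ⟨γ 0, 0, by norm_num, rfl⟩
    have h1 : Cardinal.lift.{u} #(Ioo (-1:ℝ) 1) ≤ Cardinal.lift.{u} #(⋃ y ∈ C, F y) :=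
      Cardinal.lift_le.mpr (Cardinal.mk_le_mk_of_subset hcover)
    have h2 := Cardinal.mk_biUnion_le_lift (A := F) (s := C)
    have h3 : ⨆ x : C, Cardinal.lift.{u} #(F (x:X)) ≤ ℵ₀ := ciSup_le' (fun x => hFc x)
    have h4 : Cardinal.lift.{0} #C * (⨆ x : C, Cardinal.lift.{u} #(F (x:X))) ≤ #C * ℵ₀ := by
      rw [Cardinal.lift_uzero]
      exact mul_le_mul_right h3 _
    have h5 : Cardinal.continuum ≤ #C * ℵ₀ := by
      have hIoo : #(Ioo (-1:ℝ) 1) = Cardinal.continuum := Cardinal.mk_Ioo_real (by norm_num)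
      calc Cardinal.continuum = Cardinal.lift.{u} #(Ioo (-1:ℝ) 1) := by
            rw [hIoo, Cardinal.lift_continuum]
        _ ≤ Cardinal.lift.{u} #(⋃ y ∈ C, F y) := h1
        _ ≤ Cardinal.lift.{0} #C * (⨆ x : C, Cardinal.lift.{u} #(F (x:X))) := h2
        _ ≤ #C * ℵ₀ := h4
    have h6 : #C * ℵ₀ < Cardinal.continuum :=
      Cardinal.mul_lt_of_lt Cardinal.aleph0_le_continuum hlt Cardinal.aleph0_lt_continuum
    exact absurd h5 (not_le.mpr h6)
  · intro f hf
    apply ((keyA f hf 0).image γ).mono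
    rintro x ⟨⟨t, ht, rfl⟩, hfx⟩
    exact ⟨t, ⟨ht, hfx⟩, rfl⟩


section IdealLemmas

variable {X : Type u} [NormedAddCommGroup X] [NormedSpace ℝ X]

lemma hyperplane_ideal {H : Set X} (h : IsHyperplane H) : InHyperplaneIdeal H :=
  ⟨{H}, countable_singleton H, by simpa using h, by simp⟩

lemma ideal_of_countable (hpt : ∀ x : X, ∃ H : Set X, IsHyperplane H ∧ x ∈ H)
    {Y : Set X} (hY : Y.Countable) : InHyperplaneIdeal Y := by
  choose Hf hH hmem using hpt
  refine ⟨Hf '' Y, hY.image _, ?_, ?_⟩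
  · rintro _ ⟨x, _, rfl⟩; exact hH x
  · intro y hy; exact ⟨Hf y, mem_image_of_mem _ hy, hmem y⟩

lemma ideal_sUnion {F : Set (Set X)} (hF : F.Countable)
    (h : ∀ A ∈ F, InHyperplaneIdeal A) : InHyperplaneIdeal (⋃₀ F) := by
  choose G hGc hGh hGsub using h
  haveI : Countable ↥F := hF.to_subtype
  refine ⟨⋃ (A : F), G A A.2, countable_iUnion (fun A => hGc A A.2), ?_, ?_⟩
  · rintro Hs hHs
    obtain ⟨A, hA⟩ := mem_iUnion.mp hHs
    exact hGh A A.2 Hs hA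
  · rintro y ⟨A, hAF, hyA⟩
    obtain ⟨Hs, hHsG, hyHs⟩ := hGsub A hAF hyA
    exact ⟨Hs, mem_iUnion.mpr ⟨⟨A, hAF⟩, hHsG⟩, hyHs⟩

lemma countable_of_ideal_subset {C S : Set X}
    (hC : ∀ f : X →L[ℝ] ℝ, f ≠ 0 → {x ∈ C | f x = 0}.Countable)
    (hS : S ⊆ C) (h : InHyperplaneIdeal S) : S.Countable := by
  obtain ⟨F, hFc, hFh, hFsub⟩ := h
  haveI : Countable ↥F := hFc.to_subtype
  have hsub : S ⊆ ⋃ (H : F), (S ∩ (H : Set X)) := by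
    intro x hx
    obtain ⟨H, hHF, hxH⟩ := hFsub hx
    exact mem_iUnion.mpr ⟨⟨H, hHF⟩, hx, hxH⟩
  refine Set.Countable.mono hsub (countable_iUnion ?_)
  rintro ⟨H, hHF⟩
  obtain ⟨f, hf, rfl⟩ := hFh H hHF
  refine (hC f hf).mono (fun x hx => ?_)
  exact mem_sep (hS hx.1) hx.2

lemma card_hyperplanes [TopologicalSpace.SeparableSpace X] :
    #{S : Set X // IsHyperplane S} ≤ Cardinal.continuum := by
  haveI : SecondCountableTopology X := UniformSpace.secondCountable_of_separable X
  set B := TopologicalSpace.countableBasis X with hB_def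
  set Φ : {S : Set X // IsHyperplane S} → Set ↥B :=
    fun S => {b : ↥B | (b : Set X) ⊆ (↑S : Set X)ᶜ} with hΦ_def
  have hcompl : ∀ S : {S : Set X // IsHyperplane S}, ∀ x : X,
      x ∈ (↑S : Set X)ᶜ ↔ ∃ b : ↥B, b ∈ Φ S ∧ x ∈ (b : Set X) := by
    rintro ⟨S, hSh⟩ x
    obtain ⟨f, hf, rfl⟩ := hSh
    constructor
    · intro hx
      have hopen : IsOpen ({x | f x = 0} : Set X)ᶜ :=
        (isClosed_eq f.continuous continuous_const).isOpen_compl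
      obtain ⟨b, hbB, hxb, hbsub⟩ :=
        (TopologicalSpace.isBasis_countableBasis X).exists_subset_of_mem_open hx hopen
      exact ⟨⟨b, hbB⟩, hbsub, hxb⟩
    · rintro ⟨b, hbΦ, hxb⟩
      exact hbΦ hxb
  have hΦinj : Function.Injective Φ := by
    intro S T hST
    apply Subtype.ext
    have : (↑S : Set X)ᶜ = (↑T : Set X)ᶜ := by
      ext x
      rw [hcompl S x, hcompl T x, hST]
    have := congrArg compl this
    simpa using this
  calc #{S : Set X // IsHyperplane S} ≤ #(Set ↥B) := Cardinal.mk_le_of_injective hΦinj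
    _ = 2 ^ #(↥B) := Cardinal.mk_set
    _ ≤ 2 ^ ℵ₀ := by
        apply Cardinal.power_le_power_left two_ne_zero
        exact Cardinal.mk_le_aleph0_iff.mpr (TopologicalSpace.countable_countableBasis X).to_subtype
    _ = Cardinal.continuum := Cardinal.two_power_aleph0

end IdealLemmas

/-- For a separable Banach space of dimension > 1,
add = ℵ₁, non = ℵ₁, cov = 𝔠, cof = 𝔠. -/
theorem stmt0 (X : Type u) [NormedAddCommGroup X] [NormedSpace ℝ X] [CompleteSpace X]
    [TopologicalSpace.SeparableSpace X] (hdim : 1 < Module.rank ℝ X) :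
    addH X = Cardinal.aleph 1 ∧ nonH X = Cardinal.aleph 1 ∧
      covH X = Cardinal.continuum ∧ cofH X = Cardinal.continuum := by
  haveI : Nontrivial X := rank_pos_iff_nontrivial.mp (zero_lt_one.trans hdim)
  obtain ⟨C, hCbig, hCtr⟩ := exists_big_set X
  -- biorthogonal system
  obtain ⟨u, hu⟩ := exists_ne (0 : X)
  obtain ⟨w, huw⟩ := exists_linearIndependent_pair_of_one_lt_rank hdim hu
  rw [LinearIndependent.pair_iff] at huw
  obtain ⟨g, hg1⟩ := SeparatingDual.exists_eq_one (R := ℝ) hu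
  have hw' : w - (g w) • u ≠ 0 := by
    intro h
    have h2 : (g w) • u + (-1 : ℝ) • w = 0 := by
      rw [neg_one_smul, ← sub_eq_add_neg, ← neg_sub w ((g w) • u), h, neg_zero]
    have := (huw (g w) (-1) h2).2
    norm_num at this
  obtain ⟨h0, hh1⟩ := SeparatingDual.exists_eq_one (R := ℝ) hw'
  set f₂ : X →L[ℝ] ℝ := h0 - (h0 u) • g with hf₂_def
  set f₁ : X →L[ℝ] ℝ := g - (g w) • f₂ with hf₁_def
  have hf₂u : f₂ u = 0 := by
    simp [hf₂_def, hg1]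
  have hf₂w : f₂ w = 1 := by
    have h3 : h0 w - g w * h0 u = 1 := by
      have := hh1
      rwa [map_sub, map_smul, smul_eq_mul] at this
    have h4 : f₂ w = h0 w - h0 u * g w := by simp [hf₂_def]
    rw [h4, mul_comm]
    exact h3
  have hf₁u : f₁ u = 1 := by
    simp [hf₁_def, hg1, hf₂u]
  have hf₁w : f₁ w = 0 := by
    simp [hf₁_def, hf₂w]
  have hf₂ne : f₂ ≠ 0 := by
    intro h
    rw [h] at hf₂w
    simp at hf₂w
  -- the pencil of hyperplanes
  set H : ℝ → Set X := fun t => {x | (f₁ + t • f₂) x = 0} with hH_def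
  have happly : ∀ (t : ℝ) (x : X), (f₁ + t • f₂) x = f₁ x + t * f₂ x := by
    intro t x; simp
  have hHyp : ∀ t, IsHyperplane (H t) := by
    intro t
    refine ⟨f₁ + t • f₂, ?_, rfl⟩
    intro hcontra
    have := happly t u
    rw [hcontra] at this
    simp [hf₁u, hf₂u] at this
  have hHinj : Function.Injective H := by
    intro s t hst
    have hm : (s • u - w) ∈ H s := by
      simp only [hH_def, mem_setOf_eq, happly, map_sub, map_smul, smul_eq_mul,
        hf₁u, hf₁w, hf₂u, hf₂w]
      ring
    rw [hst] at hm
    simp only [hH_def, mem_setOf_eq, happly, map_sub, map_smul, smul_eq_mul,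
      hf₁u, hf₁w, hf₂u, hf₂w] at hm
    linarith
  have hpt : ∀ x : X, ∃ Hs : Set X, IsHyperplane Hs ∧ x ∈ Hs := by
    intro x
    by_cases hx2 : f₂ x = 0
    · exact ⟨{y | f₂ y = 0}, ⟨f₂, hf₂ne, rfl⟩, hx2⟩
    · refine ⟨H (-(f₁ x / f₂ x)), hHyp _, ?_⟩
      simp only [hH_def, mem_setOf_eq, happly]
      field_simp
      ring
  have hrange : #(range H) = Cardinal.continuum := by
    have h1 := Cardinal.mk_range_eq_lift (f := H) hHinj
    rw [Cardinal.mk_real] at h1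
    rw [← Cardinal.lift_uzero #(range H), h1, Cardinal.lift_continuum]
  -- covering family
  set Fcov : Set (Set X) := insert {y | f₂ y = 0} (range H) with hFcov_def
  have hFcov_mem : ∀ A ∈ Fcov, InHyperplaneIdeal A := by
    rintro A hA
    rcases hA with rfl | ⟨t, rfl⟩
    · exact hyperplane_ideal ⟨f₂, hf₂ne, rfl⟩
    · exact hyperplane_ideal (hHyp t)
  have hFcov_cov : ⋃₀ Fcov = Set.univ := by
    apply eq_univ_of_forall
    intro x
    by_cases hx2 : f₂ x = 0
    · exact ⟨{y | f₂ y = 0}, mem_insert _ _, hx2⟩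
    · refine ⟨H (-(f₁ x / f₂ x)), mem_insert_of_mem _ (mem_range_self _), ?_⟩
      simp only [hH_def, mem_setOf_eq, happly]
      field_simp
      ring
  have hFcov_card : #Fcov = Cardinal.continuum := by
    have hnotmem : {y | f₂ y = 0} ∉ range H := by
      rintro ⟨t, ht⟩
      have h1 : u ∈ {y | f₂ y = 0} := hf₂u
      rw [← ht] at h1
      simp only [hH_def, mem_setOf_eq, happly, hf₁u, hf₂u] at h1
      norm_num at h1
    rw [hFcov_def, Cardinal.mk_insert hnotmem, hrange,
      Cardinal.add_one_eq Cardinal.aleph0_le_continuum]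
  -- lower bound for covering families
  have hcov_lower : ∀ F : Set (Set X), (∀ A ∈ F, InHyperplaneIdeal A) → ⋃₀ F = Set.univ →
      Cardinal.continuum ≤ #F := by
    intro F hmem hcov
    by_contra hlt
    push_neg at hlt
    have hsub : C ⊆ ⋃ A ∈ F, (C ∩ A) := by
      intro x hx
      have hx2 : x ∈ ⋃₀ F := by rw [hcov]; trivial
      obtain ⟨A, hAF, hxA⟩ := hx2
      exact mem_biUnion hAF ⟨hx, hxA⟩
    have hFne : Nonempty ↥F := by
      have hx2 : (0 : X) ∈ ⋃₀ F := by rw [hcov]; trivial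
      obtain ⟨A, hAF, _⟩ := hx2
      exact ⟨⟨A, hAF⟩⟩
    have hcnt : ∀ A : F, (C ∩ (A : Set X)).Countable := by
      rintro ⟨A, hAF⟩
      obtain ⟨G, hGc, hGh, hGsub⟩ := hmem A hAF
      exact countable_of_ideal_subset hCtr inter_subset_left
        ⟨G, hGc, hGh, (inter_subset_right).trans hGsub⟩
    have h5 : Cardinal.continuum ≤ #F * ℵ₀ := by
      calc Cardinal.continuum ≤ #C := hCbig
        _ ≤ #(↥(⋃ A ∈ F, (C ∩ A))) := Cardinal.mk_le_mk_of_subset hsub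
        _ ≤ #F * ⨆ A : F, #(↥(C ∩ (A : Set X))) := Cardinal.mk_biUnion_le _ _
        _ ≤ #F * ℵ₀ := mul_le_mul_right
            (ciSup_le' fun A => Cardinal.mk_le_aleph0_iff.mpr (hcnt A).to_subtype) _
    exact absurd h5 (not_le.mpr
      (Cardinal.mul_lt_of_lt Cardinal.aleph0_le_continuum hlt Cardinal.aleph0_lt_continuum))
  -- the uncountable set S
  obtain ⟨S, hSC, hScard⟩ := Cardinal.le_mk_iff_exists_subset.mp
    (Cardinal.aleph_one_le_continuum.trans hCbig)
  have hSnotideal : ¬ InHyperplaneIdeal S := by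
    intro h
    have h2 := countable_of_ideal_subset hCtr hSC h
    rw [Cardinal.countable_iff_lt_aleph_one, hScard] at h2
    exact lt_irrefl _ h2
  -- nonH
  have hnon : nonH X = Cardinal.aleph 1 := by
    apply le_antisymm
    · exact csInf_le' ⟨S, hSnotideal, hScard⟩
    · refine le_csInf ⟨Cardinal.aleph 1, ?_⟩ ?_
      · exact ⟨S, hSnotideal, hScard⟩
      rintro c ⟨Y, hY, rfl⟩
      by_contra hc
      push_neg at hc
      exact hY (ideal_of_countable hpt ((Cardinal.countable_iff_lt_aleph_one Y).mpr hc))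
  -- addH
  have hadd : addH X = Cardinal.aleph 1 := by
    have hsingexists : ∃ F : Set (Set X), (∀ A ∈ F, InHyperplaneIdeal A) ∧
        ¬ InHyperplaneIdeal (⋃₀ F) ∧ #F = Cardinal.aleph 1 := by
      refine ⟨(fun x => ({x} : Set X)) '' S, ?_, ?_, ?_⟩
      · rintro _ ⟨x, _, rfl⟩
        exact ideal_of_countable hpt (countable_singleton x)
      · have hU : ⋃₀ ((fun x => ({x} : Set X)) '' S) = S := by
          rw [sUnion_image]
          simp
        rw [hU]
        exact hSnotideal
      · rw [Cardinal.mk_image_eq Set.singleton_injective, hScard]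
    apply le_antisymm
    · exact csInf_le' hsingexists
    · refine le_csInf ⟨Cardinal.aleph 1, ?_⟩ ?_
      · exact hsingexists
      rintro c ⟨F, hFmem, hFnot, rfl⟩
      by_contra hc
      push_neg at hc
      exact hFnot (ideal_sUnion ((Cardinal.countable_iff_lt_aleph_one F).mpr hc) hFmem)
  -- covH
  have hcov : covH X = Cardinal.continuum := by
    apply le_antisymm
    · exact csInf_le' ⟨Fcov, hFcov_mem, hFcov_cov, hFcov_card⟩
    · refine le_csInf ⟨Cardinal.continuum, ?_⟩ ?_
      · exact ⟨Fcov, hFcov_mem, hFcov_cov, hFcov_card⟩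
      rintro c ⟨F, h1, h2, rfl⟩
      exact hcov_lower F h1 h2
  -- cofH
  have hcof : cofH X = Cardinal.continuum := by
    set Fcof : Set (Set X) := (fun gg : ℕ → Set X => ⋃ n, gg n) ''
      {gg | ∀ n, IsHyperplane (gg n)} with hFcof_def
    have hFcof_mem : ∀ A ∈ Fcof, InHyperplaneIdeal A := by
      rintro _ ⟨gg, hgg, rfl⟩
      refine ⟨range gg, countable_range _, ?_, ?_⟩
      · rintro _ ⟨n, rfl⟩; exact hgg n
      · rw [sUnion_range]
    have hFcof_cof : ∀ Y : Set X, InHyperplaneIdeal Y → ∃ A ∈ Fcof, Y ⊆ A := by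
      rintro Y ⟨F, hFc, hFh, hFs⟩
      rcases F.eq_empty_or_nonempty with rfl | hne
      · refine ⟨⋃ _ : ℕ, H 0, ⟨fun _ => H 0, fun _ => hHyp 0, rfl⟩, ?_⟩
        intro y hy
        exact absurd (hFs hy) (by simp)
      · obtain ⟨gg, hgg⟩ := Set.Countable.exists_eq_range hFc hne
        refine ⟨⋃ n, gg n, ⟨gg, fun n => hFh _ (by rw [hgg]; exact mem_range_self n), rfl⟩, ?_⟩
        rw [← sUnion_range, ← hgg]
        exact hFs
    have hFcof_card : #Fcof = Cardinal.continuum := by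
      apply le_antisymm
      · have hle1 : #Fcof ≤ #(↥{gg : ℕ → Set X | ∀ n, IsHyperplane (gg n)}) :=
          Cardinal.mk_image_le
        have hinj : Function.Injective
            (fun (g : ↥{gg : ℕ → Set X | ∀ n, IsHyperplane (gg n)}) =>
              (fun n => (⟨g.1 n, g.2 n⟩ : {S : Set X // IsHyperplane S}))) := by
          intro g1 g2 h
          apply Subtype.ext
          funext n
          have := congrFun h n
          exact congrArg Subtype.val this
        have hle2 : #(↥{gg : ℕ → Set X | ∀ n, IsHyperplane (gg n)}) ≤
            #(ℕ → {S : Set X // IsHyperplane S}) := Cardinal.mk_le_of_injective hinj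
        have hle3 : #(ℕ → {S : Set X // IsHyperplane S}) ≤ Cardinal.continuum := by
          rw [Cardinal.mk_arrow]
          rw [Cardinal.lift_uzero, Cardinal.mk_nat, Cardinal.lift_aleph0]
          calc #{S : Set X // IsHyperplane S} ^ (ℵ₀ : Cardinal.{u})
              ≤ Cardinal.continuum ^ (ℵ₀ : Cardinal.{u}) :=
                Cardinal.power_le_power_right card_hyperplanes
            _ = Cardinal.continuum := Cardinal.continuum_power_aleph0
        exact hle1.trans (hle2.trans hle3)
      · have hsub : range H ⊆ Fcof := by
          rintro _ ⟨t, rfl⟩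
          exact ⟨fun _ => H t, fun _ => hHyp t, iUnion_const _⟩
        calc Cardinal.continuum = #(range H) := hrange.symm
          _ ≤ #Fcof := Cardinal.mk_le_mk_of_subset hsub
    apply le_antisymm
    · exact csInf_le' ⟨Fcof, hFcof_mem, hFcof_cof, hFcof_card⟩
    · refine le_csInf ⟨Cardinal.continuum, ?_⟩ ?_
      · exact ⟨Fcof, hFcof_mem, hFcof_cof, hFcof_card⟩
      rintro c ⟨F, hFmem, hFcof', rfl⟩
      have hFcovers : ⋃₀ F = Set.univ := by
        apply eq_univ_of_forall
        intro x
        obtain ⟨A, hAF, hxA⟩ := hFcof' {x}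
          (ideal_of_countable hpt (countable_singleton x))
        exact ⟨A, hAF, hxA rfl⟩
      exact hcov_lower F hFmem hFcovers
  exact ⟨hadd, hnon, hcov, hcof⟩


end
end

section
/- Let X be a real Banach space and let H be a hyperplane of X. If H is contained in the union of a countable family {H_i : i ∈ ℕ} of hyperplanes of X, then H = H_i for some i ∈ ℕ. -/
open Cardinal Set

universe u v

noncomputable section

/-- a hyperplane contained in a countable union of hyperplanes equals one of them. -/
theorem stmt2 (X : Type u) [NormedAddCommGroup X] [NormedSpace ℝ X] [CompleteSpace X]
    (H : Set X) (hH : IsHyperplane H) (F : ℕ → Set X) (hF : ∀ i, IsHyperplane (F i))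
    (hsub : H ⊆ ⋃ i, F i) :
    ∃ i, H = F i := by
  obtain ⟨f, hf, hHf⟩ := hH
  choose g hg hFg using hF
  -- The kernel of f is a closed subspace, hence a complete (Baire) space.
  set K : Submodule ℝ X := LinearMap.ker (f : X →ₗ[ℝ] ℝ) with hK
  haveI : CompleteSpace K := inferInstance
  haveI : BaireSpace K := BaireSpace.of_completelyPseudoMetrizable
  have hmemK : ∀ x : X, x ∈ K ↔ f x = 0 := fun x => LinearMap.mem_ker
  -- cover K by the closed sets {x ∈ K | g i x = 0}
  have hcover : (⋃ i, {x : K | g i (x : X) = 0}) = Set.univ := by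
    ext x
    simp only [Set.mem_iUnion, Set.mem_univ, iff_true, Set.mem_setOf_eq]
    have hxH : (x : X) ∈ H := by rw [hHf]; exact (hmemK x).1 x.2
    obtain ⟨i, hi⟩ := Set.mem_iUnion.1 (hsub hxH)
    exact ⟨i, by have := hi; rw [hFg i] at this; exact this⟩
  have hclosed : ∀ i, IsClosed {x : K | g i (x : X) = 0} := by
    intro i
    have : Continuous fun x : K => g i (x : X) := (g i).continuous.comp continuous_subtype_val
    exact isClosed_eq this continuous_const
  obtain ⟨i, hi⟩ := nonempty_interior_of_iUnion_of_closed hclosed hcover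
  -- the set {x ∈ K | g i x = 0} is a submodule of K with nonempty interior, hence all of K
  set S : Submodule ℝ K := (LinearMap.ker (g i : X →ₗ[ℝ] ℝ)).comap K.subtype with hS
  have hSA : (S : Set K) = {x : K | g i (x : X) = 0} := rfl
  have hStop : S = ⊤ := by
    apply Submodule.eq_top_of_nonempty_interior'
    rw [hSA]; exact hi
  -- hence H ⊆ F i
  have hHsub : ∀ x : X, f x = 0 → g i x = 0 := by
    intro x hx
    have hxK : x ∈ K := (hmemK x).2 hx
    have : (⟨x, hxK⟩ : K) ∈ S := hStop ▸ Submodule.mem_top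
    exact this
  -- pick x0 with f x0 ≠ 0
  obtain ⟨x0, hx0⟩ : ∃ x0, f x0 ≠ 0 := by
    by_contra h
    push_neg at h
    exact hf (ContinuousLinearMap.ext fun x => by simp [h x])
  -- key decomposition: for any z, z - (f z / f x0) • x0 ∈ ker f
  have hdec : ∀ z : X, f (z - (f z / f x0) • x0) = 0 := by
    intro z
    simp [map_sub, map_smul, div_mul_cancel₀ _ hx0, smul_eq_mul]
  have hgx0 : g i x0 ≠ 0 := by
    intro h0
    apply hg i
    ext z
    have h1 := hHsub _ (hdec z)
    simp only [map_sub, map_smul, smul_eq_mul, h0, mul_zero, sub_zero] at h1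
    simpa using h1
  refine ⟨i, ?_⟩
  rw [hHf, hFg i]
  ext z
  simp only [Set.mem_setOf_eq]
  constructor
  · exact hHsub z
  · intro hz
    have h1 := hHsub _ (hdec z)
    simp only [map_sub, map_smul, smul_eq_mul, hz, zero_sub, neg_eq_zero] at h1
    rcases mul_eq_zero.1 h1 with h | h
    · exact (div_eq_zero_iff.1 h).resolve_right hx0
    · exact absurd h hgx0

end
end

section
/- Let X be a real Banach space of dimension greater than 1. Then add(X) = ℵ₁. -/
open Cardinal Set

universe u v

noncomputable section

lemma exists_dual_pair (X : Type u) [NormedAddCommGroup X] [NormedSpace ℝ X]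
    (hdim : 1 < Module.rank ℝ X) :
    ∃ f g : X →L[ℝ] ℝ, ∃ x y : X, f x = 1 ∧ f y = 0 ∧ g x = 0 ∧ g y = 1 := by
  have : Nontrivial X := by
    rw [← rank_pos_iff_nontrivial (R := ℝ)]
    exact lt_trans zero_lt_one hdim
  obtain ⟨x, hx⟩ := exists_ne (0 : X)
  obtain ⟨y, li⟩ := exists_linearIndependent_pair_of_one_lt_rank hdim hx
  set p : Submodule ℝ X := Submodule.span ℝ (Set.range ![x, y]) with hp
  let b : Module.Basis (Fin 2) ℝ p := Module.Basis.span li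
  haveI : FiniteDimensional ℝ p := Module.Basis.finiteDimensional_of_finite b
  obtain ⟨f, hf, -⟩ := exists_extension_norm_eq p (LinearMap.toContinuousLinearMap (b.coord 0))
  obtain ⟨g, hg, -⟩ := exists_extension_norm_eq p (LinearMap.toContinuousLinearMap (b.coord 1))
  have e0 : ((b 0 : p) : X) = x := congrArg Subtype.val (Module.Basis.span_apply li 0)
  have e1 : ((b 1 : p) : X) = y := congrArg Subtype.val (Module.Basis.span_apply li 1)
  refine ⟨f, g, x, y, ?_, ?_, ?_, ?_⟩
  · have := hf (b 0); rw [e0] at this; simpa using this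
  · have := hf (b 1); rw [e1] at this; simpa using this
  · have := hg (b 0); rw [e0] at this; simpa using this
  · have := hg (b 1); rw [e1] at this; simpa using this

lemma sUnion_ideal {X : Type u} [NormedAddCommGroup X] [NormedSpace ℝ X]
    {F : Set (Set X)} (hc : F.Countable) (h : ∀ A ∈ F, InHyperplaneIdeal A) :
    InHyperplaneIdeal (⋃₀ F) := by
  haveI := hc.to_subtype
  choose G hGc hGh hGcov using fun A : F => h A A.2
  refine ⟨⋃ A : F, G A, countable_iUnion hGc, ?_, ?_⟩
  · rintro H hH
    obtain ⟨A, hA⟩ := mem_iUnion.mp hH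
    exact hGh A H hA
  · rintro z ⟨A, hA, hz⟩
    obtain ⟨H, hH, hzH⟩ := hGcov ⟨A, hA⟩ hz
    exact ⟨H, mem_iUnion.mpr ⟨⟨A, hA⟩, hH⟩, hzH⟩

/-- a functional vanishing on the kernel of φ has the same zero set (given φ x = 1, ψ ≠ 0). -/
lemma ker_eq_of_subset {X : Type u} [NormedAddCommGroup X] [NormedSpace ℝ X]
    (φ ψ : X →L[ℝ] ℝ) (x : X) (hφx : φ x = 1) (hψ : ψ ≠ 0)
    (h : ∀ z, φ z = 0 → ψ z = 0) : {z | ψ z = 0} = {z | φ z = 0} := by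
  have key : ∀ z, ψ z = φ z * ψ x := by
    intro z
    have hz : φ (z - φ z • x) = 0 := by simp [hφx]
    have := h _ hz
    simp only [map_sub, map_smul, smul_eq_mul] at this
    linarith
  have hψx : ψ x ≠ 0 := by
    intro h0
    apply hψ
    ext z
    simp [key z, h0]
  ext z
  simp only [mem_setOf_eq, key z]
  constructor
  · intro hz
    rcases mul_eq_zero.mp hz with h1 | h1
    · exact h1
    · exact absurd h1 hψx
  · intro hz; rw [hz, zero_mul]

/-- Baire category: if the kernel of φ is covered by countably many hyperplanes,
one of them equals it. -/
lemma baire_step {X : Type u} [NormedAddCommGroup X] [NormedSpace ℝ X] [CompleteSpace X]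
    (φ : X →L[ℝ] ℝ) (x : X) (hφx : φ x = 1)
    {G : Set (Set X)} (hGc : G.Countable) (hGh : ∀ H ∈ G, IsHyperplane H)
    (hcov : {z | φ z = 0} ⊆ ⋃₀ G) : ∃ H ∈ G, H = {z | φ z = 0} := by
  classical
  set K : Set X := {z | φ z = 0} with hK
  have hKker : K = (LinearMap.ker (φ : X →ₗ[ℝ] ℝ) : Set X) := by ext z; simp [hK, LinearMap.mem_ker]
  have hKcl : IsClosed K := isClosed_eq φ.continuous continuous_const
  have hGne : G.Nonempty := by
    rcases hcov (show (0 : X) ∈ K by simp [hK]) with ⟨H, hH, -⟩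
    exact ⟨H, hH⟩
  obtain ⟨e, rfl⟩ := hGc.exists_eq_range hGne
  choose ψ hψne hψe using fun n => hGh (e n) ⟨n, rfl⟩
  haveI : CompleteSpace K := hKcl.completeSpace_coe
  haveI : Nonempty K := ⟨⟨0, by simp [hK]⟩⟩
  set C : ℕ → Set K := fun n => Subtype.val ⁻¹' (e n) with hC
  have hCcl : ∀ n, IsClosed (C n) := by
    intro n
    show IsClosed (Subtype.val ⁻¹' (e n))
    rw [hψe n]
    exact IsClosed.preimage continuous_subtype_val
      (isClosed_eq (ψ n).continuous continuous_const)
  have hCun : ⋃ n, C n = Set.univ := by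
    ext z
    simp only [mem_iUnion, Set.mem_univ, iff_true, hC, mem_preimage]
    rcases hcov z.2 with ⟨H, ⟨n, rfl⟩, hz⟩
    exact ⟨n, hz⟩
  obtain ⟨n, c, hc⟩ := nonempty_interior_of_iUnion_of_closed hCcl hCun
  obtain ⟨ε, hε, hball⟩ := Metric.mem_nhds_iff.mp (mem_interior_iff_mem_nhds.mp hc)
  have hz0 : ∀ z : K, dist z c < ε → ψ n (z : X) = 0 := by
    intro z hz
    have h2 : (z : X) ∈ e n := hball hz
    rw [hψe n] at h2
    exact h2
  have hcmem : ψ n (c : X) = 0 := hz0 c (by simpa using hε)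
  have hker : ∀ z, φ z = 0 → ψ n z = 0 := by
    intro v hv
    set δ : ℝ := ε / (2 * (‖v‖ + 1)) with hδ
    have hden : (0:ℝ) < 2 * (‖v‖ + 1) := by positivity
    have hδpos : 0 < δ := div_pos hε hden
    have hmem : (c : X) + δ • v ∈ K := by
      simp [hK, hv, (show φ (c:X) = 0 from c.2)]
    have hd : dist (⟨(c : X) + δ • v, hmem⟩ : K) c < ε := by
      rw [Subtype.dist_eq]
      simp only [dist_eq_norm, add_sub_cancel_left, norm_smul, Real.norm_eq_abs,
        abs_of_pos hδpos]
      calc δ * ‖v‖ ≤ δ * (‖v‖ + 1) := by nlinarith [norm_nonneg v]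
        _ < ε := by rw [hδ]; rw [div_mul_eq_mul_div]; rw [div_lt_iff₀ hden]; nlinarith
    have := hz0 _ hd
    simp only [map_add, map_smul, smul_eq_mul, hcmem, zero_add] at this
    rcases mul_eq_zero.mp this with h1 | h1
    · exact absurd h1 (ne_of_gt hδpos)
    · exact h1
  refine ⟨e n, ⟨n, rfl⟩, ?_⟩
  rw [hψe n]
  exact ker_eq_of_subset φ (ψ n) x hφx (hψne n) hker

/-- add(X) = ℵ₁ for any Banach space of dimension > 1. -/
theorem stmt3 (X : Type u) [NormedAddCommGroup X] [NormedSpace ℝ X] [CompleteSpace X]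
    (hdim : 1 < Module.rank ℝ X) :
    addH X = Cardinal.aleph 1 := by
  classical
  obtain ⟨f, g, x, y, hfx, hfy, hgx, hgy⟩ := exists_dual_pair X hdim
  set φ : ℝ → (X →L[ℝ] ℝ) := fun t => f + t • g with hφ
  have hφx : ∀ t, φ t x = 1 := by intro t; simp [hφ, hfx, hgx]
  have hφv : ∀ t, φ t (y - t • x) = 0 := by
    intro t; simp [hφ, hfx, hfy, hgx, hgy]
  have hφv' : ∀ t s, φ s (y - t • x) = s - t := by
    intro t s; simp [hφ, hfx, hfy, hgx, hgy]; ring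
  set Hfun : ℝ → Set X := fun t => {z | φ t z = 0} with hHfun
  have hinj : Function.Injective Hfun := by
    intro t s hts
    have h1 : (y - t • x) ∈ Hfun t := hφv t
    rw [hts] at h1
    have h2 : φ s (y - t • x) = 0 := h1
    rw [hφv' t s] at h2
    linarith
  have hhyp : ∀ t, IsHyperplane (Hfun t) := by
    intro t
    refine ⟨φ t, ?_, rfl⟩
    intro h0
    have := hφx t
    rw [h0] at this
    simp at this
  obtain ⟨T, hT⟩ : ∃ T : Set ℝ, #T = (aleph 1 : Cardinal.{0}) :=
    Cardinal.le_mk_iff_exists_set.mp (Cardinal.mk_real ▸ Cardinal.aleph_one_le_continuum)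
  set F : Set (Set X) := Hfun '' T with hF
  have hmem : aleph 1 ∈ {c | ∃ F : Set (Set X), (∀ A ∈ F, InHyperplaneIdeal A) ∧
      ¬ InHyperplaneIdeal (⋃₀ F) ∧ #F = c} := by
    refine ⟨F, ?_, ?_, ?_⟩
    · rintro A ⟨t, -, rfl⟩
      exact ⟨{Hfun t}, countable_singleton _,
        by rintro H rfl; exact hhyp t, subset_sUnion_of_mem rfl⟩
    · rintro ⟨G, hGc, hGh, hcov⟩
      have hstep : ∀ t : T, ∃ H ∈ G, H = Hfun (t : ℝ) := by
        intro t
        refine baire_step (φ t) x (hφx t) hGc hGh ?_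
        exact Subset.trans
          (subset_sUnion_of_mem (show Hfun (t:ℝ) ∈ F from ⟨(t:ℝ), t.2, rfl⟩)) hcov
      choose Hc hHG hHeq using hstep
      haveI := hGc.to_subtype
      have hinjT : Function.Injective (fun t : T => (⟨Hc t, hHG t⟩ : G)) := by
        intro t s hts
        have : Hc t = Hc s := congrArg Subtype.val hts
        have h2 : Hfun (t : ℝ) = Hfun (s : ℝ) := by rw [← hHeq t, ← hHeq s, this]
        exact Subtype.ext (hinj h2)
      haveI : Countable T := hinjT.countable
      have : T.Countable := Set.countable_coe_iff.mp this
      have := (Cardinal.countable_iff_lt_aleph_one T).mp this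
      rw [hT] at this
      exact absurd this (lt_irrefl _)
    · have h1 := Cardinal.mk_image_eq_lift Hfun T hinj
      rw [hT] at h1
      have h2 : Cardinal.lift.{u} (aleph 1 : Cardinal.{0}) = (aleph 1 : Cardinal.{u}) := by
        rw [Cardinal.lift_aleph, Ordinal.lift_one]
      rw [h2] at h1
      rw [hF]
      rw [← h1]
      exact (Cardinal.lift_uzero _).symm
  refine le_antisymm (csInf_le' hmem) (le_csInf ⟨_, hmem⟩ ?_)
  rintro c ⟨F', hall, hnot, rfl⟩
  by_contra hlt
  push_neg at hlt
  exact hnot (sUnion_ideal ((Cardinal.countable_iff_lt_aleph_one F').mpr hlt) hall)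


end
end

section
/- Let X be a real Banach space of dimension greater than 1. Then dens(X) ≤ non(X); if dens(X) is uncountable then non(X) ≤ cf([dens(X)]^ω); and if the cofinality of dens(X) is ω, then dens(X) < non(X). -/
open Cardinal Set
open scoped NNReal ENNReal Topology


universe u v

noncomputable section

section Aux

variable {X : Type u} [NormedAddCommGroup X] [NormedSpace ℝ X]

lemma ideal_mono {Y Z : Set X} (h : Y ⊆ Z) (hZ : InHyperplaneIdeal Z) : InHyperplaneIdeal Y := by
  obtain ⟨F, h1, h2, h3⟩ := hZ; exact ⟨F, h1, h2, h.trans h3⟩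

lemma ideal_iUnion {ι : Type w} [Countable ι] {A : ι → Set X} (h : ∀ i, InHyperplaneIdeal (A i)) :
    InHyperplaneIdeal (⋃ i, A i) := by
  choose F hFc hFh hFs using h
  refine ⟨⋃ i, F i, countable_iUnion hFc, ?_, ?_⟩
  · intro H hH; rcases mem_iUnion.1 hH with ⟨i, hi⟩; exact hFh i H hi
  · intro x hx
    rcases mem_iUnion.1 hx with ⟨i, hi⟩
    rcases hFs i hi with ⟨H, hH, hxH⟩
    exact ⟨H, mem_iUnion.2 ⟨i, hH⟩, hxH⟩

lemma exists_functional (M : Submodule ℝ X) (hM : IsClosed (M : Set X)) (hne : M ≠ ⊤) :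
    ∃ f : X →L[ℝ] ℝ, f ≠ 0 ∧ ∀ x ∈ M, f x = 0 := by
  obtain ⟨x, hx⟩ : ∃ x, x ∉ M := by
    by_contra h
    push_neg at h
    exact hne (Submodule.eq_top_iff'.2 h)
  obtain ⟨f, u, hfu, hux⟩ := geometric_hahn_banach_closed_point (M.convex) hM hx
  have hu0 : (0:ℝ) < u := by simpa using hfu 0 M.zero_mem
  refine ⟨f, ?_, ?_⟩
  · rintro rfl
    simp only [ContinuousLinearMap.zero_apply] at hux
    linarith
  · intro y hy
    by_contra hfy
    have h1 : ∀ t : ℝ, f (t • y) < u := fun t => hfu _ (M.smul_mem t hy)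
    have h2 := h1 ((u+1) / f y)
    rw [map_smul, smul_eq_mul, div_mul_cancel₀ _ hfy] at h2
    linarith

lemma nontrivial_of_dim (hdim : 1 < Module.rank ℝ X) : Nontrivial X :=
  rank_pos_iff_nontrivial.1 (lt_trans zero_lt_one hdim)

lemma exists_hyperplane_mem (hdim : 1 < Module.rank ℝ X) (x : X) :
    ∃ H : Set X, IsHyperplane H ∧ x ∈ H := by
  have hfd : FiniteDimensional ℝ (Submodule.span ℝ ({x} : Set X)) :=
    FiniteDimensional.span_of_finite ℝ (Set.finite_singleton x)
  have hcl : IsClosed ((Submodule.span ℝ ({x} : Set X)) : Set X) :=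
    Submodule.closed_of_finiteDimensional _
  have hne : Submodule.span ℝ ({x} : Set X) ≠ ⊤ := by
    intro h
    have h1 : Module.rank ℝ X ≤ 1 := by
      have h2 := rank_span_le (R := ℝ) (M := X) {x}
      rw [h] at h2
      rw [Cardinal.mk_singleton] at h2
      calc Module.rank ℝ X = Module.rank ℝ (⊤ : Submodule ℝ X) := (rank_top ℝ X).symm
        _ ≤ 1 := h2
    exact absurd hdim (not_lt.2 h1)
  obtain ⟨f, hf0, hfv⟩ := exists_functional _ hcl hne
  exact ⟨{y | f y = 0}, ⟨f, hf0, rfl⟩, hfv x (Submodule.mem_span_singleton_self x)⟩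

lemma countable_in_ideal (hdim : 1 < Module.rank ℝ X) {Z : Set X} (hZ : Z.Countable) :
    InHyperplaneIdeal Z := by
  choose H hH hmem using fun x : X => exists_hyperplane_mem (X := X) hdim x
  refine ⟨H '' Z, hZ.image H, ?_, ?_⟩
  · rintro _ ⟨x, _, rfl⟩; exact hH x
  · intro z hz; exact ⟨H z, ⟨z, hz, rfl⟩, hmem z⟩

lemma densH_le_of_dense (D : Set X) (hD : Dense D) : densH X ≤ #D :=
  csInf_le (OrderBot.bddBelow _) ⟨D, hD, rfl⟩

lemma exists_dense_card : ∃ D : Set X, Dense D ∧ #D = densH X := by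
  have h : {c | ∃ D : Set X, Dense D ∧ #D = c}.Nonempty := ⟨#(univ : Set X), univ, dense_univ, rfl⟩
  exact csInf_mem h

lemma densH_le_max (Y : Set X) (hY : Y.Nonempty) (h : Dense ((Submodule.span ℝ Y) : Set X)) :
    densH X ≤ max ℵ₀ #Y := by
  letI : Module ℚ X := Module.compHom X (Rat.castHom ℝ)
  set p : Submodule ℚ X := Submodule.span ℚ Y with hp
  have hsub : ((Submodule.span ℝ Y) : Set X) ⊆ closure (p : Set X) := by
    intro z hz
    induction hz using Submodule.span_induction with
    | mem y hy => exact subset_closure (Submodule.subset_span hy)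
    | zero => exact subset_closure p.zero_mem
    | add a b _ _ hca hcb =>
        rcases mem_closure_iff_seq_limit.1 hca with ⟨s, hs, hsl⟩
        rcases mem_closure_iff_seq_limit.1 hcb with ⟨t, ht, htl⟩
        exact mem_closure_iff_seq_limit.2
          ⟨fun n => s n + t n, fun n => p.add_mem (hs n) (ht n), hsl.add htl⟩
    | smul r a _ hca =>
        rcases mem_closure_iff_seq_limit.1 hca with ⟨s, hs, hsl⟩
        rcases mem_closure_iff_seq_limit.1 (Rat.denseRange_cast (𝕜 := ℝ) r) with ⟨q, hq, hql⟩
        choose qr hqr using hq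
        refine mem_closure_iff_seq_limit.2 ⟨fun n => q n • s n, fun n => ?_, hql.smul hsl⟩
        show q n • s n ∈ (p : Set X)
        have hqs : q n • s n = (qr n : ℚ) • s n := by
          rw [← hqr n]; rfl
        rw [hqs]
        exact p.smul_mem (qr n) (hs n)
  have hdense : Dense (p : Set X) := by
    have hcl : closure ((Submodule.span ℝ Y) : Set X) ⊆ closure (p : Set X) := by
      simpa [closure_closure] using closure_mono hsub
    exact fun x => hcl (h x)
  rcases hY with ⟨y0, hy0⟩
  haveI : Nonempty Y := ⟨⟨y0, hy0⟩⟩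
  have hcard : #(p : Set X) ≤ max ℵ₀ #Y := by
    have h1 : (p : Set X) = Set.range (⇑(Finsupp.linearCombination ℚ ((↑) : Y → X))) := by
      rw [← LinearMap.coe_range, Finsupp.range_linearCombination, Subtype.range_coe]
    rw [h1]
    calc #(Set.range (⇑(Finsupp.linearCombination ℚ ((↑) : Y → X))))
        ≤ #(Y →₀ ℚ) := Cardinal.mk_range_le
      _ = max (Cardinal.lift.{0} #Y) (Cardinal.lift.{u} #ℚ) := by
          simpa using Cardinal.mk_finsupp_lift_of_infinite' (↥Y) ℚ
      _ = max ℵ₀ #Y := by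
          rw [Cardinal.lift_uzero, Cardinal.mkRat, Cardinal.lift_aleph0, max_comm]
  exact (densH_le_of_dense _ hdense).trans hcard

lemma in_ideal_of_lt_dens (hdim : 1 < Module.rank ℝ X) {Y : Set X} (hY : #Y < densH X) :
    InHyperplaneIdeal Y := by
  by_cases hc : Y.Countable
  · exact countable_in_ideal hdim hc
  · have hY0 : Y.Nonempty := by
      rcases Y.eq_empty_or_nonempty with rfl | h
      · exact absurd countable_empty hc
      · exact h
    have haleph : ℵ₀ ≤ #Y := by
      by_contra h'
      rw [not_le] at h'
      exact hc (Set.countable_coe_iff.1 (Cardinal.mk_le_aleph0_iff.1 (le_of_lt h')))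
    set M := (Submodule.span ℝ Y).topologicalClosure with hM
    have hMc : IsClosed (M : Set X) := Submodule.isClosed_topologicalClosure _
    have hMne : M ≠ ⊤ := by
      intro htop
      have hd : Dense ((Submodule.span ℝ Y) : Set X) :=
        Submodule.dense_iff_topologicalClosure_eq_top.2 htop
      have hle := densH_le_max Y hY0 hd
      rw [max_eq_right haleph] at hle
      exact absurd hY (not_lt.2 hle)
    obtain ⟨f, hf0, hfv⟩ := exists_functional M hMc hMne
    refine ⟨{{x | f x = 0}}, countable_singleton _, ?_, ?_⟩
    · intro H hH
      rw [mem_singleton_iff] at hH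
      exact hH ▸ ⟨f, hf0, rfl⟩
    · intro y hy
      exact ⟨_, mem_singleton _, hfv y (Submodule.le_topologicalClosure _ (Submodule.subset_span hy))⟩

lemma univ_not_in_ideal [CompleteSpace X] (hdim : 1 < Module.rank ℝ X) :
    ¬ InHyperplaneIdeal (Set.univ : Set X) := by
  haveI := nontrivial_of_dim hdim
  rintro ⟨F, hFc, hFh, hFu⟩
  haveI := hFc.to_subtype
  have hcl : ∀ H : F, IsClosed (H : Set X) := by
    rintro ⟨H, hH⟩
    obtain ⟨f, _, rfl⟩ := hFh H hH
    exact isClosed_eq f.continuous continuous_const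
  have hU : (⋃ H : F, (H : Set X)) = Set.univ := by
    rw [← sUnion_eq_iUnion]
    exact univ_subset_iff.1 hFu
  obtain ⟨H, hH⟩ := nonempty_interior_of_iUnion_of_closed hcl hU
  obtain ⟨f, hf0, hHf⟩ := hFh H H.2
  apply hf0
  have hker : (LinearMap.ker (f : X →ₗ[ℝ] ℝ) : Set X) = (H : Set X) := by
    rw [hHf]; rfl
  have htop : LinearMap.ker (f : X →ₗ[ℝ] ℝ) = ⊤ := by
    apply Submodule.eq_top_of_nonempty_interior'
    rw [hker]
    exact hH
  ext x
  have hx : x ∈ LinearMap.ker (f : X →ₗ[ℝ] ℝ) := htop ▸ Submodule.mem_top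
  simpa using hx

lemma exists_curve {X : Type u} [NormedAddCommGroup X] [NormedSpace ℝ X] [CompleteSpace X]
    (A : Set X) (hA : A.Countable) :
    ∃ y : ℝ → X, ∀ f : X →L[ℝ] ℝ, (∃ x ∈ A, f x ≠ 0) →
      {t | t ∈ Set.Ioo (0:ℝ) 1 ∧ f (y t) = 0}.Countable := by
  obtain ⟨a, ha⟩ : ∃ a : ℕ → X, insert (0:X) A = Set.range a :=
    (hA.insert 0).exists_eq_range (insert_nonempty _ _)
  set u : ℕ → X := fun n => ((2^n * (1 + ‖a n‖))⁻¹ : ℝ) • a n with hu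
  have hpos : ∀ n, (0:ℝ) < 2^n * (1 + ‖a n‖) := by
    intro n; positivity
  have hunorm : ∀ n, ‖u n‖ ≤ (1/2 : ℝ)^n := by
    intro n
    rw [hu]
    simp only []
    rw [norm_smul, Real.norm_eq_abs, abs_of_pos (inv_pos.2 (hpos n)), mul_inv]
    have h3 : (0:ℝ) < 1 + ‖a n‖ := by positivity
    have h4 : (1 + ‖a n‖)⁻¹ * ‖a n‖ ≤ 1 := by
      rw [← div_eq_inv_mul]
      exact div_le_one_of_le₀ (by linarith) (le_of_lt h3)
    calc (2^n)⁻¹ * (1 + ‖a n‖)⁻¹ * ‖a n‖ = (2^n)⁻¹ * ((1 + ‖a n‖)⁻¹ * ‖a n‖) := by ring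
      _ ≤ (2^n)⁻¹ * 1 := by
          apply mul_le_mul_of_nonneg_left h4
          positivity
      _ = (1/2)^n := by rw [mul_one, one_div, inv_pow]
  have hsum : ∀ t : ℝ, |t| < 3/2 → Summable (fun n => t^n • u n) := by
    intro t ht
    apply Summable.of_norm
    apply Summable.of_nonneg_of_le (fun n => norm_nonneg _) (fun n => ?_)
      (summable_geometric_of_lt_one (r := |t| * (1/2)) (by positivity) (by linarith))
    rw [norm_smul, norm_pow, Real.norm_eq_abs, mul_pow]
    exact mul_le_mul_of_nonneg_left (hunorm n) (by positivity)
  set y : ℝ → X := fun t => ∑' n, t^n • u n with hy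
  refine ⟨y, ?_⟩
  rintro f ⟨x, hxA, hfx⟩
  obtain ⟨m, ham⟩ : ∃ m, a m = x := by
    have : x ∈ Set.range a := ha ▸ mem_insert_of_mem _ hxA
    exact this.imp fun m hm => hm
  set c : ℕ → ℝ := fun n => f (u n) with hc
  have hcm : c m ≠ 0 := by
    rw [hc]
    simp only [hu]
    rw [map_smul, smul_eq_mul, ham]
    exact mul_ne_zero (inv_ne_zero (ne_of_gt (by rw [← ham]; exact hpos m))) hfx
  have hcb : ∀ n, |c n| ≤ ‖f‖ * (1/2)^n := by
    intro n
    calc |c n| = ‖f (u n)‖ := rfl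
      _ ≤ ‖f‖ * ‖u n‖ := f.le_opNorm _
      _ ≤ ‖f‖ * (1/2)^n := mul_le_mul_of_nonneg_left (hunorm n) (norm_nonneg f)
  set p : FormalMultilinearSeries ℝ ℝ ℝ :=
    fun n => ContinuousMultilinearMap.mkPiRing ℝ (Fin n) (c n) with hpdef
  have hpapply : ∀ n (t : ℝ), (p n fun _ => t) = t^n * c n := by
    intro n t
    rw [hpdef]
    simp only [ContinuousMultilinearMap.mkPiRing_apply]
    rw [Finset.prod_const, Finset.card_univ, Fintype.card_fin, smul_eq_mul]
  set g : ℝ → ℝ := fun t => f (y t) with hg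
  have hball : ∀ t : ℝ, t ∈ Metric.eball (0:ℝ) ((3/2 : ℝ≥0) : ℝ≥0∞) ↔ |t| < 3/2 := by
    intro t
    rw [Metric.emetric_ball_nnreal, Metric.mem_ball, Real.dist_eq, sub_zero]
    norm_num
  have hgp : HasFPowerSeriesOnBall g p 0 ((3/2 : ℝ≥0) : ℝ≥0∞) := by
    refine ⟨?_, ?_, ?_⟩
    · apply p.le_radius_of_bound ‖f‖
      intro n
      have h1 : ‖p n‖ = |c n| := by
        rw [hpdef]; exact ContinuousMultilinearMap.norm_mkPiRing (c n)
      rw [h1]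
      have : ((3/2 : ℝ≥0) : ℝ)^n = (3/2 : ℝ)^n := by norm_num
      rw [this]
      calc |c n| * (3/2)^n ≤ (‖f‖ * (1/2)^n) * (3/2)^n := by
            apply mul_le_mul_of_nonneg_right (hcb n) (by positivity)
        _ = ‖f‖ * (3/4)^n := by rw [mul_assoc, ← mul_pow]; norm_num
        _ ≤ ‖f‖ * 1 := by
            apply mul_le_mul_of_nonneg_left _ (norm_nonneg f)
            exact pow_le_one₀ (by norm_num) (by norm_num)
        _ = ‖f‖ := mul_one _
    · norm_num
    · intro ty hty
      rw [mem_emetric_ball_zero_iff] at hty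
      have hty' : |ty| < 3/2 := by
        have := ENNReal.coe_lt_coe.1 hty
        have h2 : ‖ty‖ < ((3/2 : ℝ≥0) : ℝ) := this
        rw [Real.norm_eq_abs] at h2
        calc |ty| < ((3/2 : ℝ≥0) : ℝ) := h2
          _ = 3/2 := by norm_num
      have hs := (hsum ty hty').hasSum
      have hmap := hs.mapL f
      simp only [zero_add]
      have heq : (fun n => p n fun _ => ty) = fun n => f (ty^n • u n) := by
        funext n
        rw [hpapply n ty, map_smul, smul_eq_mul]
      rw [heq]
      exact hmap
  have hp0 : p ≠ 0 := by
    intro h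
    apply hcm
    have := congrFun h m
    have h2 := congrFun (congrArg DFunLike.coe this) (fun _ => (1:ℝ))
    rw [hpapply m 1] at h2
    simpa using h2
  set Z := {t | t ∈ Set.Ioo (0:ℝ) 1 ∧ f (y t) = 0} with hZ
  have hZball : Z ⊆ Metric.eball (0:ℝ) ((3/2 : ℝ≥0) : ℝ≥0∞) := by
    intro t ht
    rw [hball]
    rcases ht.1 with ⟨h1, h2⟩
    rw [abs_of_pos h1]; linarith
  have hpre : IsPreconnected (Metric.eball (0:ℝ) ((3/2 : ℝ≥0) : ℝ≥0∞)) := by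
    rw [Metric.emetric_ball_nnreal]
    exact (convex_ball _ _).isPreconnected
  have hana := hgp.analyticOnNhd
  haveI : DiscreteTopology ↥Z := by
    rw [discreteTopology_subtype_iff]
    intro t ht
    have htball : t ∈ Metric.eball (0:ℝ) ((3/2 : ℝ≥0) : ℝ≥0∞) := hZball ht
    rcases (hana t htball).eventually_eq_zero_or_eventually_ne_zero with hcase | hcase
    · exfalso
      apply hp0
      have hfreq : ∃ᶠ z in nhdsWithin t {t}ᶜ, g z = 0 :=
        (hcase.filter_mono nhdsWithin_le_nhds).frequently
      have hEq : EqOn g 0 (Metric.eball (0:ℝ) ((3/2 : ℝ≥0) : ℝ≥0∞)) :=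
        hana.eqOn_zero_of_preconnected_of_frequently_eq_zero hpre htball hfreq
      have hev : ∀ᶠ z in nhds (0:ℝ), g z = 0 := by
        have hopen : IsOpen (Metric.eball (0:ℝ) ((3/2 : ℝ≥0) : ℝ≥0∞)) := EMetric.isOpen_ball
        have hmem : (0:ℝ) ∈ Metric.eball (0:ℝ) ((3/2 : ℝ≥0) : ℝ≥0∞) := by
          rw [hball]; norm_num
        filter_upwards [hopen.mem_nhds hmem] with z hz
        exact hEq hz
      exact hgp.hasFPowerSeriesAt.eq_zero_of_eventually hev
    · rw [Filter.inf_principal_eq_bot]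
      apply hcase.mono
      intro z hz hzZ
      exact hz hzZ.2
  have : Countable ↥Z := by
    have hsep : TopologicalSpace.SeparableSpace ↥Z := inferInstance
    exact TopologicalSpace.separableSpace_iff_countable.1 hsep
  exact Set.countable_coe_iff.1 this

end Aux

/-- dens(X) ≤ non(X); if dens(X) is uncountable then non(X) ≤ cf([dens(X)]^ω);
and if cf(dens(X)) = ω then dens(X) < non(X). -/
theorem stmt5 (X : Type u) [NormedAddCommGroup X] [NormedSpace ℝ X] [CompleteSpace X]
    (hdim : 1 < Module.rank ℝ X) :
    densH X ≤ nonH X ∧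
      (Cardinal.aleph0 < densH X → nonH X ≤ cfCtblSubsets (densH X)) ∧
      ((densH X).ord.cof = Cardinal.aleph0 → densH X < nonH X) := by

  have hSne : {c | ∃ Y : Set X, ¬ InHyperplaneIdeal Y ∧ #Y = c}.Nonempty :=
    ⟨#(Set.univ : Set X), Set.univ, univ_not_in_ideal hdim, rfl⟩
  obtain ⟨Y0, hY0, hY0c⟩ : ∃ Y : Set X, ¬ InHyperplaneIdeal Y ∧ #Y = nonH X := csInf_mem hSne
  have h1 : densH X ≤ nonH X := by
    by_contra h
    rw [not_le] at h
    exact hY0 (in_ideal_of_lt_dens hdim (by rw [hY0c]; exact h))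
  refine ⟨h1, ?_, ?_⟩
  · -- Part 2
    intro hκ
    obtain ⟨D, hD, hDc⟩ := exists_dense_card (X := X)
    have hDeq : #↥D = #((densH X).out) := by rw [hDc, Cardinal.mk_out]
    obtain ⟨e⟩ := Cardinal.eq.1 hDeq
    set d : (densH X).out → X := fun α => ((e.symm α : ↥D) : X) with hd
    have hdrange : Set.range d = D := by
      rw [hd]
      have : (fun α => ((e.symm α : ↥D) : X)) = (Subtype.val ∘ e.symm) := rfl
      rw [this, Set.range_comp, Equiv.range_eq_univ, Set.image_univ, Subtype.range_coe]
    have hdd : Dense (Set.range d) := hdrange ▸ hD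
    have hFne : {c | ∃ F : Set (Set (densH X).out), (∀ S ∈ F, S.Countable) ∧
        (∀ S : Set (densH X).out, S.Countable → ∃ T ∈ F, S ⊆ T) ∧ #F = c}.Nonempty :=
      ⟨_, {S : Set (densH X).out | S.Countable}, fun S hS => hS,
        fun S hS => ⟨S, hS, subset_rfl⟩, rfl⟩
    obtain ⟨F, hFc, hFcof, hFcard⟩ : ∃ F : Set (Set (densH X).out), (∀ S ∈ F, S.Countable) ∧
        (∀ S : Set (densH X).out, S.Countable → ∃ T ∈ F, S ⊆ T) ∧
        #F = cfCtblSubsets (densH X) := csInf_mem hFne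
    obtain ⟨T0, hT0, -⟩ := hFcof ∅ countable_empty
    haveI : Nonempty ↥F := ⟨⟨T0, hT0⟩⟩
    have hFbig : ℵ₀ < #F := by
      by_contra hle
      rw [not_lt] at hle
      have hFcnt : F.Countable := Cardinal.mk_le_aleph0_iff.1 hle |> Set.countable_coe_iff.1
      have hucnt : (⋃₀ F).Countable := (Set.Countable.sUnion_iff hFcnt).2 hFc
      have hnc : ¬ (Set.univ : Set (densH X).out).Countable := by
        rw [Set.countable_univ_iff, ← Cardinal.mk_le_aleph0_iff, Cardinal.mk_out, not_le]
        exact hκ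
      have hne_univ : ⋃₀ F ≠ Set.univ := fun h => hnc (h ▸ hucnt)
      obtain ⟨x, hx⟩ : ∃ x, x ∉ ⋃₀ F := by
        by_contra h
        push_neg at h
        exact hne_univ (Set.eq_univ_of_forall h)
      rcases hFcof {x} (countable_singleton x) with ⟨T, hT, hsub⟩
      exact hx ⟨T, hT, hsub rfl⟩
    have hℵ1F : ℵ₁ ≤ #↥F := by
      rw [← Cardinal.succ_aleph0]
      exact Order.succ_le_of_lt hFbig
    -- the uncountable parameter set W
    have hWex : (ℵ₁ : Cardinal.{0}) ≤ #↥(Set.Ioo (0:ℝ) 1) := by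
      rw [Cardinal.mk_Ioo_real zero_lt_one]
      exact Cardinal.aleph_one_le_continuum
    obtain ⟨W', hW'⟩ := Cardinal.le_mk_iff_exists_set.1 hWex
    set W : Set ℝ := Subtype.val '' W' with hWdef
    have hWsub : W ⊆ Set.Ioo (0:ℝ) 1 := by rintro _ ⟨w, _, rfl⟩; exact w.2
    have hWcard : #W = ℵ₁ := by
      rw [hWdef, Cardinal.mk_image_eq Subtype.val_injective, hW']
    have hWunc : ¬ W.Countable := by
      intro hc
      have h2 : #W ≤ ℵ₀ := Cardinal.mk_le_aleph0_iff.2 hc.to_subtype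
      rw [hWcard] at h2
      exact absurd h2 (not_le.2 Cardinal.aleph0_lt_aleph_one)
    -- curves
    have hch : ∀ T : ↥F, ∃ y : ℝ → X, ∀ f : X →L[ℝ] ℝ,
        (∃ x ∈ d '' (T : Set (densH X).out), f x ≠ 0) →
        {t | t ∈ Set.Ioo (0:ℝ) 1 ∧ f (y t) = 0}.Countable :=
      fun T => exists_curve _ ((hFc T T.2).image d)
    choose curve hcv using hch
    set Y : Set X := ⋃ T : ↥F, curve T '' W with hYdef
    have himg : ∀ T : ↥F, #↥(curve T '' W) ≤ ℵ₁ := by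
      intro T
      have h1' := Cardinal.mk_image_le_lift (f := curve T) (s := W)
      rw [Cardinal.lift_uzero, hWcard] at h1'
      calc #↥(curve T '' W) ≤ Cardinal.lift.{u} (ℵ₁ : Cardinal.{0}) := h1'
        _ = ℵ₁ := by rw [Cardinal.lift_aleph, Ordinal.lift_one]
    have hYcard : #Y ≤ #↥F := by
      calc #Y ≤ #↥F * ⨆ T : ↥F, #↥(curve T '' W) := Cardinal.mk_iUnion_le _
        _ ≤ #↥F * ℵ₁ := mul_le_mul' le_rfl (ciSup_le himg)
        _ = max (#↥F) ℵ₁ := Cardinal.mul_eq_max (le_trans Cardinal.aleph0_lt_aleph_one.le hℵ1F)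
            Cardinal.aleph0_lt_aleph_one.le
        _ = #↥F := max_eq_left hℵ1F
    have hYnot : ¬ InHyperplaneIdeal Y := by
      rintro ⟨G, hGc, hGh, hGcov⟩
      haveI := hGc.to_subtype
      have hGfun : ∀ H : ↥G, ∃ f : X →L[ℝ] ℝ, f ≠ 0 ∧ (H : Set X) = {x | f x = 0} :=
        fun H => hGh H H.2
      choose fH hfH0 hfHeq using hGfun
      have hα : ∀ H : ↥G, ∃ α : (densH X).out, fH H (d α) ≠ 0 := by
        intro H
        have hx0 : ∃ x0, fH H x0 ≠ 0 := by
          by_contra hno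
          push_neg at hno
          exact hfH0 H (ContinuousLinearMap.ext fun z => by simpa using hno z)
        rcases hx0 with ⟨x0, hx0⟩
        have hopen : IsOpen {x : X | fH H x ≠ 0} :=
          isOpen_compl_singleton.preimage (fH H).continuous
        rcases hdd.exists_mem_open hopen ⟨x0, hx0⟩ with ⟨z, hz, hzopen⟩
        rcases hz with ⟨α, rfl⟩
        exact ⟨α, hzopen⟩
      choose αH hαH using hα
      set S : Set (densH X).out := Set.range αH with hS
      rcases hFcof S (countable_range _) with ⟨T, hTF, hST⟩
      have hkey : ∀ H : ↥G,
          {t | t ∈ Set.Ioo (0:ℝ) 1 ∧ fH H (curve ⟨T, hTF⟩ t) = 0}.Countable := by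
        intro H
        apply hcv ⟨T, hTF⟩
        exact ⟨d (αH H), ⟨αH H, hST ⟨H, rfl⟩, rfl⟩, hαH H⟩
      have hbad : ¬ (W ⊆ ⋃ H : ↥G,
          {t | t ∈ Set.Ioo (0:ℝ) 1 ∧ fH H (curve ⟨T, hTF⟩ t) = 0}) := by
        intro hsubW
        exact hWunc (Set.Countable.mono hsubW (countable_iUnion hkey))
      rcases Set.not_subset.1 hbad with ⟨t, htW, htavoid⟩
      have hyY : curve ⟨T, hTF⟩ t ∈ Y := Set.mem_iUnion.2 ⟨⟨T, hTF⟩, t, htW, rfl⟩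
      rcases hGcov hyY with ⟨H, hHG, hyH⟩
      apply htavoid
      refine Set.mem_iUnion.2 ⟨⟨H, hHG⟩, hWsub htW, ?_⟩
      have heqH : H = {x : X | fH ⟨H, hHG⟩ x = 0} := hfHeq ⟨H, hHG⟩
      rw [heqH] at hyH
      exact hyH
    have hfin : nonH X ≤ #Y := csInf_le (OrderBot.bddBelow _) ⟨Y, hYnot, rfl⟩
    calc nonH X ≤ #Y := hfin
      _ ≤ #↥F := hYcard
      _ = cfCtblSubsets (densH X) := hFcard
  · -- Part 3
    intro hcof
    rcases lt_or_eq_of_le h1 with hlt | heq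
    · exact hlt
    exfalso
    by_cases hκ : densH X ≤ ℵ₀
    · apply hY0
      apply countable_in_ideal hdim
      rw [← Set.countable_coe_iff]
      exact Cardinal.mk_le_aleph0_iff.1 (by rw [hY0c, ← heq]; exact hκ)
    · rw [not_le] at hκ
      obtain ⟨r, wo, hr⟩ := Cardinal.ord_eq ↥Y0
      haveI := wo
      obtain ⟨ι, fseq, hlsub, hι⟩ := Ordinal.exists_lsub_cof (Ordinal.type r)
      haveI : Countable ι := by
        apply Cardinal.mk_le_aleph0_iff.1
        rw [hι, ← hr, hY0c, ← heq, hcof]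
      have hfi : ∀ i, fseq i < Ordinal.type r := fun i => hlsub ▸ Ordinal.lt_lsub fseq i
      set xi : ι → ↥Y0 := fun i => Ordinal.enum r ⟨fseq i, hfi i⟩ with hxi
      set A : ι → Set X := fun i => Subtype.val '' {y : ↥Y0 | r y (xi i) ∨ y = xi i} with hA
      apply hY0
      apply ideal_mono (Z := ⋃ i, A i) ?_ (ideal_iUnion fun i => ?_)
      · intro z hz
        have hzt : Ordinal.typein r ⟨z, hz⟩ < Ordinal.type r := Ordinal.typein_lt_type r _
        rw [← hlsub] at hzt
        rcases Ordinal.lt_lsub_iff.1 hzt with ⟨i, hi⟩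
        have hle : Ordinal.typein r ⟨z, hz⟩ ≤ Ordinal.typein r (xi i) := by
          rw [hxi]
          simp only []
          rw [Ordinal.typein_enum]
          exact hi
        rcases lt_or_eq_of_le hle with hlt' | heqt
        · exact Set.mem_iUnion.2 ⟨i, ⟨z, hz⟩, Or.inl ((Ordinal.typein_lt_typein r).1 hlt'), rfl⟩
        · exact Set.mem_iUnion.2 ⟨i, ⟨z, hz⟩, Or.inr (Ordinal.typein_injective r heqt), rfl⟩
      · apply in_ideal_of_lt_dens hdim
        have hsub2 : {y : ↥Y0 | r y (xi i) ∨ y = xi i}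
            = insert (xi i) {y : ↥Y0 | r y (xi i)} := by
          ext w
          simp [Set.mem_insert_iff, or_comm]
        have h2 : #(A i) ≤ #{y : ↥Y0 | r y (xi i)} + 1 := by
          calc #(A i) ≤ #↥{y : ↥Y0 | r y (xi i) ∨ y = xi i} := Cardinal.mk_image_le
            _ = #↥(insert (xi i) {y : ↥Y0 | r y (xi i)}) := by rw [hsub2]
            _ ≤ #{y : ↥Y0 | r y (xi i)} + 1 := Cardinal.mk_insert_le
        have h3 : #{y : ↥Y0 | r y (xi i)} < densH X := by
          have h4 := Cardinal.card_typein_lt (r := r) (xi i) hr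
          have h5 : #{y : ↥Y0 | r y (xi i)} = (Ordinal.typein r (xi i)).card :=
            Ordinal.card_typein (xi i)
          rw [hY0c, ← heq] at h4
          rw [h5]
          exact h4
        have h6 : #{y : ↥Y0 | r y (xi i)} + 1 < densH X := by
          rcases lt_or_ge (#{y : ↥Y0 | r y (xi i)}) ℵ₀ with hsmall | hbig
          · calc #{y : ↥Y0 | r y (xi i)} + 1 < ℵ₀ := Cardinal.add_lt_aleph0 hsmall Cardinal.one_lt_aleph0
            _ < densH X := hκ
          · rw [Cardinal.add_one_eq hbig]
            exact h3
        exact lt_of_le_of_lt h2 h6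

end
end

section
/- Let X be a real Banach space of dimension greater than 1. Then ℵ₁ ≤ cov(X) ≤ 𝔠 (the cardinality of the continuum). Moreover, if the cofinality of dens(X) is uncountable, then cov(X) ≤ cf(dens(X)); in particular, if dens(X) = ℵ₁ then cov(X) = ℵ₁. -/
open Cardinal Set

universe u v

noncomputable section

section Aux

variable {X : Type u} [NormedAddCommGroup X] [NormedSpace ℝ X]

/-- Rational linear combinations of elements of `s`. -/
def ratSpan (s : Set X) : Set X :=
  Set.range (fun l : List (ℚ × s) => (l.map fun p => ((p.1 : ℝ) • (p.2 : X))).sum)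

lemma subset_ratSpan (s : Set X) : s ⊆ ratSpan s := by
  intro x hx
  exact ⟨[((1 : ℚ), ⟨x, hx⟩)], by simp⟩

lemma zero_mem_ratSpan (s : Set X) : (0 : X) ∈ ratSpan s := ⟨[], by simp⟩

lemma add_mem_ratSpan {s : Set X} {x y : X} (hx : x ∈ ratSpan s) (hy : y ∈ ratSpan s) :
    x + y ∈ ratSpan s := by
  obtain ⟨l₁, rfl⟩ := hx; obtain ⟨l₂, rfl⟩ := hy
  exact ⟨l₁ ++ l₂, by simp⟩

lemma ratSmul_mem_ratSpan {s : Set X} (q : ℚ) {x : X} (hx : x ∈ ratSpan s) :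
    (q : ℝ) • x ∈ ratSpan s := by
  obtain ⟨l, rfl⟩ := hx
  refine ⟨l.map (fun p => (q * p.1, p.2)), ?_⟩
  simp [List.smul_sum, List.map_map, Function.comp_def, smul_smul]

lemma mk_ratSpan_le (s : Set X) : #(ratSpan s) ≤ max ℵ₀ #s := by
  calc #(ratSpan s) ≤ #(List (ℚ × s)) := Cardinal.mk_range_le
    _ ≤ max ℵ₀ #(ℚ × s) := Cardinal.mk_list_le_max _
    _ ≤ max ℵ₀ #s := by
        apply max_le (le_max_left _ _)
        calc #(ℚ × s) = ℵ₀ * #s := by simp [Cardinal.mk_prod]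
          _ ≤ max (max ℵ₀ #s) ℵ₀ := Cardinal.mul_le_max _ _
          _ ≤ max ℵ₀ #s := by simp

lemma smul_mem_closure_ratSpan {s : Set X} (r : ℝ) {x : X} (hx : x ∈ closure (ratSpan s)) :
    r • x ∈ closure (ratSpan s) := by
  have hC : IsClosed {t : ℝ | t • x ∈ closure (ratSpan s)} :=
    IsClosed.preimage (continuous_id.smul continuous_const) isClosed_closure
  have hQ : Set.range ((↑) : ℚ → ℝ) ⊆ {t : ℝ | t • x ∈ closure (ratSpan s)} := by
    rintro - ⟨q, rfl⟩
    exact (Set.MapsTo.closure (fun y hy => ratSmul_mem_ratSpan q hy)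
      (continuous_const.smul continuous_id)) hx
  have : (Set.univ : Set ℝ) ⊆ {t : ℝ | t • x ∈ closure (ratSpan s)} := by
    rw [← Rat.denseRange_cast.closure_eq]
    exact hC.closure_subset_iff.mpr hQ
  exact this (mem_univ r)

/-- The closed real subspace generated by rational combinations of `s`. -/
def clSpan (s : Set X) : Submodule ℝ X where
  carrier := closure (ratSpan s)
  zero_mem' := subset_closure (zero_mem_ratSpan s)
  add_mem' := by
    intro a b ha hb
    have hab : (a, b) ∈ closure (ratSpan s ×ˢ ratSpan s) := by
      rw [closure_prod_eq]; exact ⟨ha, hb⟩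
    have := image_closure_subset_closure_image
      (f := fun p : X × X => p.1 + p.2) continuous_add (Set.mem_image_of_mem _ hab)
    refine closure_mono ?_ this
    rintro - ⟨⟨a', b'⟩, ⟨ha', hb'⟩, rfl⟩
    exact add_mem_ratSpan ha' hb'
  smul_mem' := fun r x hx => smul_mem_closure_ratSpan r hx

lemma clSpan_coe (s : Set X) : (clSpan s : Set X) = closure (ratSpan s) := rfl

lemma inIdeal_of_subset_hyperplane {Y H : Set X} (hH : IsHyperplane H) (hYH : Y ⊆ H) :
    InHyperplaneIdeal Y :=
  ⟨{H}, countable_singleton H, by simpa using hH, by simpa using hYH⟩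

lemma inIdeal_of_proper (M : Submodule ℝ X) (hcl : IsClosed (M : Set X))
    (hne : (M : Set X) ≠ Set.univ) : InHyperplaneIdeal (M : Set X) := by
  obtain ⟨x, hx⟩ : ∃ x, x ∉ M := by
    by_contra h
    push_neg at h
    exact hne (Set.eq_univ_of_forall h)
  obtain ⟨f, u, hfu, hux⟩ := geometric_hahn_banach_closed_point (M.convex) hcl hx
  have hu : 0 < u := by simpa using hfu 0 M.zero_mem
  have hvan : ∀ a ∈ M, f a = 0 := by
    intro a ha
    by_contra hfa
    have h2 : f (((u + 1) / f a) • a) < u := hfu _ (M.smul_mem _ ha)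
    rw [map_smul, smul_eq_mul, div_mul_cancel₀ _ hfa] at h2
    linarith
  refine inIdeal_of_subset_hyperplane (H := {y | f y = 0}) ⟨f, ?_, rfl⟩ (fun a ha => hvan a ha)
  intro hf0
  rw [hf0] at hux
  simp at hux
  linarith

lemma inIdeal_sUnion {F : Set (Set X)} (hc : F.Countable) (h : ∀ A ∈ F, InHyperplaneIdeal A) :
    InHyperplaneIdeal (⋃₀ F) := by
  choose g hg1 hg2 hg3 using h
  haveI := hc.to_subtype
  refine ⟨⋃ (A : F), g A A.2, countable_iUnion (fun A => hg1 A A.2), ?_, ?_⟩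
  · intro H hH
    simp only [Set.mem_iUnion] at hH
    obtain ⟨A, hA⟩ := hH
    exact hg2 A A.2 H hA
  · rintro x ⟨A, hA, hxA⟩
    obtain ⟨H, hH, hxH⟩ := hg3 A hA hxA
    exact ⟨H, Set.mem_iUnion.2 ⟨⟨A, hA⟩, hH⟩, hxH⟩

lemma not_inIdeal_univ [CompleteSpace X] [Nontrivial X] :
    ¬ InHyperplaneIdeal (Set.univ : Set X) := by
  rintro ⟨F, hc, hH, hcov⟩
  haveI := hc.to_subtype
  have hU : ⋃ (H : F), (H : Set X) = Set.univ := by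
    apply Set.eq_univ_of_univ_subset
    intro x hx
    obtain ⟨H, hHF, hxH⟩ := hcov hx
    exact Set.mem_iUnion.2 ⟨⟨H, hHF⟩, hxH⟩
  have hclosed : ∀ H : F, IsClosed (H : Set X) := by
    intro H
    obtain ⟨f, hf0, hfH⟩ := hH H H.2
    rw [hfH]
    exact isClosed_eq f.continuous continuous_const
  obtain ⟨H, hHint⟩ := nonempty_interior_of_iUnion_of_closed
    (f := fun H : F => (H : Set X)) hclosed hU
  obtain ⟨f, hf0, hfH⟩ := hH H H.2
  have hker : (H : Set X) = (LinearMap.ker (f : X →ₗ[ℝ] ℝ) : Set X) := by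
    rw [hfH]; ext y; simp [LinearMap.mem_ker]
  rw [hker] at hHint
  have := Submodule.eq_top_of_nonempty_interior' _ hHint
  rw [LinearMap.ker_eq_top] at this
  exact hf0 (by ext y; exact DFunLike.congr_fun this y)

lemma exists_two_functionals [CompleteSpace X] (hdim : 1 < Module.rank ℝ X) :
    ∃ f g : X →L[ℝ] ℝ, (∀ a b : ℝ, ¬(a = 0 ∧ b = 0) → a • f + b • g ≠ 0) ∧
      ∀ x : X, ∃ a b : ℝ, ¬(a = 0 ∧ b = 0) ∧ a * f x + b * g x = 0 := by
  have hnr : ¬ Module.rank ℝ X ≤ 1 := not_le.mpr hdim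
  rw [rank_le_one_iff] at hnr
  push_neg at hnr
  haveI : Nontrivial X := by
    obtain ⟨v, hv⟩ := hnr 0
    exact ⟨v, 0, by intro h; exact hv 0 (by simp [h])⟩
  obtain ⟨v, hv⟩ : ∃ v : X, v ≠ 0 := exists_ne 0
  obtain ⟨f₀, _, hf₀v⟩ := exists_dual_vector ℝ v (norm_ne_zero_iff.mpr hv)
  set f : X →L[ℝ] ℝ := (‖v‖⁻¹ : ℝ) • f₀ with hf
  have hfv : f v = 1 := by
    simp [hf, hf₀v, inv_mul_cancel₀ (norm_ne_zero_iff.mpr hv)]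
  obtain ⟨w, hw⟩ := hnr v
  set w' : X := w - f w • v with hw'
  have hw'0 : w' ≠ 0 := by
    intro h
    apply hw (f w)
    have : w - f w • v = 0 := by simpa [hw'] using h
    rw [sub_eq_zero] at this
    exact this.symm
  have hfw' : f w' = 0 := by simp [hw', hfv, map_sub]
  obtain ⟨g₀, _, hg₀⟩ := exists_dual_vector ℝ w' (norm_ne_zero_iff.mpr hw'0)
  set g : X →L[ℝ] ℝ := g₀ - g₀ v • f with hg
  have hgv : g v = 0 := by simp [hg, hfv]
  have hgw' : g w' = ‖w'‖ := by simp [hg, hfw', hg₀]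
  have hgw'0 : g w' ≠ 0 := by rw [hgw']; exact norm_ne_zero_iff.mpr hw'0
  refine ⟨f, g, ?_, ?_⟩
  · rintro a b hab h0
    have ha : a = 0 := by
      have := DFunLike.congr_fun h0 v
      simpa [hfv, hgv] using this
    have hb : b = 0 := by
      have := DFunLike.congr_fun h0 w'
      rcases (by simpa [ha, hfw'] using this : b = 0 ∨ g w' = 0) with h | h
      · exact h
      · exact absurd h hgw'0
    exact hab ⟨ha, hb⟩
  · intro x
    by_cases hfx : f x = 0
    · exact ⟨1, 0, by simp, by simp [hfx]⟩
    · exact ⟨g x, -(f x), fun h => hfx (by simpa using h.2), by ring⟩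

lemma exists_cover [CompleteSpace X]
    (hfg : ∃ f g : X →L[ℝ] ℝ, (∀ a b : ℝ, ¬(a = 0 ∧ b = 0) → a • f + b • g ≠ 0) ∧
      ∀ x : X, ∃ a b : ℝ, ¬(a = 0 ∧ b = 0) ∧ a * f x + b * g x = 0) :
    ∃ F : Set (Set X), (∀ A ∈ F, InHyperplaneIdeal A) ∧ ⋃₀ F = Set.univ ∧
      Cardinal.mk F ≤ Cardinal.continuum := by
  obtain ⟨f, g, hind, hcov⟩ := hfg
  set A : ℝ × ℝ → Set X := fun p =>
    if p.1 = 0 ∧ p.2 = 0 then {x | f x = 0} else {x | p.1 * f x + p.2 * g x = 0} with hA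
  have hhyp : ∀ p, IsHyperplane (A p) := by
    intro p
    by_cases hp : p.1 = 0 ∧ p.2 = 0
    · refine ⟨f, ?_, by simp [hA, hp]⟩
      have := hind 1 0 (by simp)
      simpa using this
    · refine ⟨p.1 • f + p.2 • g, hind _ _ hp, ?_⟩
      simp only [hA, if_neg hp]
      ext x
      simp [ContinuousLinearMap.add_apply, ContinuousLinearMap.smul_apply, smul_eq_mul]
  refine ⟨Set.range A, ?_, ?_, ?_⟩
  · rintro B ⟨p, rfl⟩
    exact inIdeal_of_subset_hyperplane (hhyp p) subset_rfl
  · apply Set.eq_univ_of_univ_subset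
    intro x _
    obtain ⟨a, b, hab, heq⟩ := hcov x
    refine ⟨A (a, b), ⟨(a, b), rfl⟩, ?_⟩
    simp only [hA, if_neg hab]
    exact heq
  · have h1 : Cardinal.lift.{0} #(Set.range A) ≤ Cardinal.lift.{u} #(ℝ × ℝ) :=
      Cardinal.mk_range_le_lift
    rw [Cardinal.lift_uzero] at h1
    have h2 : #(ℝ × ℝ) = Cardinal.continuum := by
      simp [Cardinal.mk_prod, Cardinal.mk_real, Cardinal.mul_eq_self Cardinal.aleph0_le_continuum]
    rw [h2] at h1
    rwa [Cardinal.lift_continuum] at h1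

lemma aux_cof_eq {α : Type u} (r : α → α → Prop) [H : IsWellOrder α r] :
    ∃ S : Set α, (∀ a, ∃ b ∈ S, ¬ r b a) ∧ #S = Ordinal.cof (Ordinal.type r) := by
  classical
  let := linearOrderOfSTO r
  have : WellFoundedLT α := H.toIsWellFounded
  obtain ⟨s, hs, hs'⟩ := Order.exists_cof_eq α
  refine ⟨s, fun a => ?_, ?_⟩
  · obtain ⟨b, hb, hab⟩ := hs a
    exact ⟨b, hb, not_lt_of_ge hab⟩
  · rw [hs']; exact (Ordinal.cof_type α).symm

lemma aux_lt_cof_type {α : Type u} {r : α → α → Prop} [H : IsWellOrder α r] {S : Set α}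
    (h : #S < Ordinal.cof (Ordinal.type r)) : ∃ a, ∀ b ∈ S, r b a := by
  classical
  let := linearOrderOfSTO r
  have : WellFoundedLT α := H.toIsWellFounded
  by_contra hc
  push_neg at hc
  have hS : IsCofinal S := fun a => by
    obtain ⟨b, hb, hba⟩ := hc a
    exact ⟨b, hb, not_lt.mp hba⟩
  have h2 : Order.cof α ≤ #S := Order.cof_le hS
  rw [← Ordinal.cof_type α] at h2
  exact absurd h (not_lt_of_ge h2)

lemma covH_le_cof [CompleteSpace X] (hcf : ℵ₀ < (densH X).ord.cof) :
    covH X ≤ (densH X).ord.cof := by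
  have hne : {c | ∃ D : Set X, Dense D ∧ #D = c}.Nonempty :=
    ⟨#(Set.univ : Set X), Set.univ, dense_univ, rfl⟩
  obtain ⟨D, hD, hDcard0⟩ := csInf_mem hne
  have hDcard : #↥D = densH X := hDcard0
  have hκinf : ℵ₀ < densH X := hcf.trans_le (Ordinal.cof_ord_le _)
  obtain ⟨r, wo, hord⟩ := Cardinal.ord_eq ↥D
  have hord' : (densH X).ord = Ordinal.type r := by rw [← hDcard]; exact hord
  obtain ⟨S, hSunb, hScard⟩ := aux_cof_eq r
  have hcofS : #S = (densH X).ord.cof := by rw [hScard, hord']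
  set P : ↥D → Set X := fun c => Subtype.val '' {d : ↥D | r d c ∨ d = c} with hP
  have hPcard : ∀ c, #(P c) < densH X := by
    intro c
    have h1 : #(P c) ≤ #{d : ↥D | r d c ∨ d = c} := Cardinal.mk_image_le
    have h2 : #{d : ↥D | r d c ∨ d = c} ≤ #(insert c {d : ↥D | r d c} : Set ↥D) := by
      apply Cardinal.mk_le_mk_of_subset
      rintro d (hd | rfl)
      · exact Set.mem_insert_of_mem _ hd
      · exact Set.mem_insert _ _
    have h3 : #(insert c {d : ↥D | r d c} : Set ↥D) ≤ #{d : ↥D | r d c} + 1 :=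
      Cardinal.mk_insert_le
    have h4 : #{d : ↥D | r d c} < densH X := by
      have : #{d : ↥D | r d c} < #↥D := Cardinal.card_typein_lt (r := r) c hord
      rwa [hDcard] at this
    have h5 : #{d : ↥D | r d c} + 1 < densH X :=
      Cardinal.add_lt_of_lt hκinf.le h4 (lt_of_lt_of_le Cardinal.one_lt_aleph0 hκinf.le)
    exact h1.trans_lt ((h2.trans h3).trans_lt h5)
  set Y : ↥D → Set X := fun c => (clSpan (P c) : Set X) with hY
  have hYproper : ∀ c, Y c ≠ Set.univ := by
    intro c h
    have hdense : Dense (ratSpan (P c)) := by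
      rw [dense_iff_closure_eq, ← clSpan_coe]
      exact h
    have h1 : densH X ≤ #(ratSpan (P c)) := csInf_le' ⟨ratSpan (P c), hdense, rfl⟩
    have h2 : #(ratSpan (P c)) < densH X :=
      (mk_ratSpan_le _).trans_lt (max_lt hκinf (hPcard c))
    exact absurd (h1.trans_lt h2) (lt_irrefl _)
  have hYideal : ∀ c, InHyperplaneIdeal (Y c) := by
    intro c
    have := inIdeal_of_proper (clSpan (P c))
      (by rw [clSpan_coe]; exact isClosed_closure) (hYproper c)
    exact this
  have hYclosed : ∀ c, IsClosed (Y c) := by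
    intro c
    show IsClosed (clSpan (P c) : Set X)
    rw [clSpan_coe]; exact isClosed_closure
  have hcover : ⋃₀ (Y '' S) = Set.univ := by
    apply Set.eq_univ_of_univ_subset
    intro x _
    have hx : x ∈ closure D := hD x
    rw [mem_closure_iff_seq_limit] at hx
    obtain ⟨u, hu, hlim⟩ := hx
    set v : ℕ → ↥D := fun n => ⟨u n, hu n⟩ with hv
    have hTlt : #(Set.range v) < Ordinal.cof (Ordinal.type r) := by
      refine lt_of_le_of_lt (Set.countable_range v).le_aleph0 ?_
      rw [← hord']
      exact hcf
    obtain ⟨a, ha⟩ := aux_lt_cof_type hTlt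
    obtain ⟨c, hcS, hca⟩ := hSunb a
    have hmem : ∀ n, u n ∈ Y c := by
      intro n
      have hvn : r (v n) c ∨ v n = c := by
        rcases trichotomous_of r (v n) c with h | h | h
        · exact Or.inl h
        · exact Or.inr h
        · exact absurd (trans_of r h (ha (v n) ⟨n, rfl⟩)) hca
      have : u n ∈ P c := ⟨v n, hvn, rfl⟩
      show u n ∈ (clSpan (P c) : Set X)
      rw [clSpan_coe]
      exact subset_closure (subset_ratSpan _ this)
    exact ⟨Y c, ⟨c, hcS, rfl⟩, (hYclosed c).mem_of_tendsto hlim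
      (Filter.Eventually.of_forall hmem)⟩
  have hcard : #(Y '' S) ≤ (densH X).ord.cof := by
    rw [← hcofS]
    exact Cardinal.mk_image_le
  refine le_trans (csInf_le' ?_) hcard
  exact ⟨Y '' S, by rintro A ⟨c, _, rfl⟩; exact hYideal c, hcover, rfl⟩

end Aux

/-- ℵ₁ ≤ cov(X) ≤ 𝔠; if cf(dens(X)) is uncountable then cov(X) ≤ cf(dens(X));
in particular dens(X) = ℵ₁ implies cov(X) = ℵ₁. -/
theorem stmt6 (X : Type u) [NormedAddCommGroup X] [NormedSpace ℝ X] [CompleteSpace X]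
    (hdim : 1 < Module.rank ℝ X) :
    Cardinal.aleph 1 ≤ covH X ∧ covH X ≤ Cardinal.continuum ∧
      (Cardinal.aleph0 < (densH X).ord.cof → covH X ≤ (densH X).ord.cof) ∧
      (densH X = Cardinal.aleph 1 → covH X = Cardinal.aleph 1) := by
  haveI : Nontrivial X := rank_pos_iff_nontrivial.mp (lt_trans zero_lt_one hdim)
  obtain ⟨F₀, hF₀ideal, hF₀cov, hF₀card⟩ := exists_cover (exists_two_functionals hdim)
  have hmem₀ : #F₀ ∈ {c | ∃ F : Set (Set X), (∀ A ∈ F, InHyperplaneIdeal A) ∧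
      ⋃₀ F = Set.univ ∧ #F = c} := ⟨F₀, hF₀ideal, hF₀cov, rfl⟩
  have hcov_le : covH X ≤ Cardinal.continuum := le_trans (csInf_le' hmem₀) hF₀card
  have haleph : Cardinal.aleph 1 ≤ covH X := by
    refine le_csInf ⟨#F₀, hmem₀⟩ ?_
    rintro c ⟨F, hF1, hF2, rfl⟩
    by_contra hlt
    rw [not_le] at hlt
    have hcnt : F.Countable := (Cardinal.countable_iff_lt_aleph_one F).mpr hlt
    have h := inIdeal_sUnion hcnt hF1
    rw [hF2] at h
    exact not_inIdeal_univ h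
  refine ⟨haleph, hcov_le, covH_le_cof, ?_⟩
  intro hd
  refine le_antisymm ?_ haleph
  have h1 : ℵ₀ < (densH X).ord.cof := by
    rw [hd, Cardinal.isRegular_aleph_one.cof_eq]
    exact Cardinal.aleph0_lt_aleph_one
  have h2 := covH_le_cof h1
  rwa [hd, Cardinal.isRegular_aleph_one.cof_eq] at h2


end
end

section
/- For every nonseparable real Banach space X there is a bounded linear operator T : X → ℓ∞(Γ), where Γ is a set of cardinality ℵ₁, whose range is nonseparable. -/
open Cardinal Set

universe u v

noncomputable section

section AuxStmt8

open TopologicalSpace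

namespace Stmt8Aux

variable {X : Type u} [NormedAddCommGroup X] [NormedSpace ℝ X]

lemma key_step (hsep : ¬ TopologicalSpace.SeparableSpace X) {s : Set X} (hs : s.Countable) :
    ∃ p : X × (X →L[ℝ] ℝ), ‖p.2‖ ≤ 1 ∧ p.2 p.1 = 2 ∧ ∀ y ∈ s, p.2 y = 0 := by
  set Y : Set X := closure (Submodule.span ℝ s : Set X) with hYdef
  have hYsep : IsSeparable Y := (hs.isSeparable.span).closure
  have hYne : Y ≠ Set.univ := by
    intro h
    exact hsep (isSeparable_univ_iff.1 (h ▸ hYsep))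
  obtain ⟨z, hz⟩ := (Set.ne_univ_iff_exists_notMem Y).1 hYne
  have hconv : Convex ℝ Y := by
    rw [hYdef, ← Submodule.topologicalClosure_coe]
    exact (Submodule.span ℝ s).topologicalClosure.convex
  obtain ⟨f, u, hfu, huz⟩ := geometric_hahn_banach_closed_point hconv isClosed_closure hz
  have hY0 : ∀ y ∈ Y, f y = 0 := by
    intro y hy
    by_contra hne
    have hmem : ∀ t : ℝ, t • y ∈ Y := by
      intro t
      rw [hYdef, ← Submodule.topologicalClosure_coe] at hy ⊢
      exact (Submodule.span ℝ s).topologicalClosure.smul_mem t hy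
    have h1 : ((|u| + 1) / f y) * f y < u := by
      have := hfu _ (hmem ((|u| + 1) / f y))
      rwa [map_smul, smul_eq_mul] at this
    rw [div_mul_cancel₀ _ hne] at h1
    have := abs_nonneg u
    have := le_abs_self u
    linarith
  have h0Y : (0 : X) ∈ Y := subset_closure (Submodule.zero_mem _)
  have hu0 : 0 < u := by have := hfu 0 h0Y; simpa using this
  have hfz : 0 < f z := lt_trans hu0 huz
  have hfne : ‖f‖ ≠ 0 := by
    intro h
    rw [norm_eq_zero] at h
    rw [h] at hfz; simp at hfz
  set g : X →L[ℝ] ℝ := ‖f‖⁻¹ • f with hgdef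
  have hgz : 0 < g z := by
    have : (0:ℝ) < ‖f‖⁻¹ := inv_pos.2 ((norm_nonneg f).lt_of_ne (Ne.symm hfne))
    simpa [hgdef] using mul_pos this hfz
  refine ⟨⟨(2 / g z) • z, g⟩, ?_, ?_, ?_⟩
  · calc ‖g‖ ≤ ‖(‖f‖⁻¹)‖ * ‖f‖ := norm_smul_le _ f
      _ = 1 := by
        rw [Real.norm_eq_abs, abs_of_nonneg (inv_nonneg.2 (norm_nonneg f)),
          inv_mul_cancel₀ hfne]
  · simp only [map_smul, smul_eq_mul]
    field_simp
  · intro y hy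
    have hyY : y ∈ Y := subset_closure (Submodule.subset_span hy)
    simp [hgdef, hY0 y hyY]

lemma countable_prev {I : Type v} [LinearOrder I] (hI : ∀ a : I, (Set.Iio a).Countable) (a : I)
    (g : ∀ b, b < a → X) : (Set.range fun b : Set.Iio a => g b.1 b.2).Countable :=
  have := (hI a).to_subtype
  Set.countable_range _

def stepFun (hsep : ¬ TopologicalSpace.SeparableSpace X) {I : Type v} [LinearOrder I]
    (hI : ∀ a : I, (Set.Iio a).Countable) (a : I)
    (ih : ∀ b, b < a → X × (X →L[ℝ] ℝ)) : X × (X →L[ℝ] ℝ) :=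
  Classical.choose (key_step hsep (countable_prev hI a (fun b h => (ih b h).1)))

def fam (hsep : ¬ TopologicalSpace.SeparableSpace X) {I : Type v} [LinearOrder I]
    [WellFoundedLT I] (hI : ∀ a : I, (Set.Iio a).Countable) : I → X × (X →L[ℝ] ℝ) :=
  wellFounded_lt.fix (stepFun hsep hI)

lemma fam_eq (hsep : ¬ TopologicalSpace.SeparableSpace X) {I : Type v} [LinearOrder I]
    [WellFoundedLT I] (hI : ∀ a : I, (Set.Iio a).Countable) (a : I) :
    fam hsep hI a = stepFun hsep hI a (fun b _ => fam hsep hI b) :=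
  WellFounded.fix_eq _ _ _

lemma exists_fam (hsep : ¬ TopologicalSpace.SeparableSpace X) (I : Type v) [LinearOrder I]
    [WellFoundedLT I] (hI : ∀ a : I, (Set.Iio a).Countable) :
    ∃ (x : I → X) (f : I → X →L[ℝ] ℝ), (∀ a, ‖f a‖ ≤ 1) ∧ (∀ a, f a (x a) = 2) ∧
      ∀ a b, a < b → f b (x a) = 0 := by
  refine ⟨fun a => (fam hsep hI a).1, fun a => (fam hsep hI a).2, fun a => ?_, fun a => ?_,
    fun a b hab => ?_⟩
  · show ‖(fam hsep hI a).2‖ ≤ 1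
    rw [fam_eq hsep hI a]
    exact (Classical.choose_spec (key_step hsep
      (countable_prev hI a (fun b _ => (fam hsep hI b).1)))).1
  · show (fam hsep hI a).2 (fam hsep hI a).1 = 2
    rw [fam_eq hsep hI a]
    exact (Classical.choose_spec (key_step hsep
      (countable_prev hI a (fun b _ => (fam hsep hI b).1)))).2.1
  · show (fam hsep hI b).2 (fam hsep hI a).1 = 0
    rw [fam_eq hsep hI b]
    exact (Classical.choose_spec (key_step hsep
      (countable_prev hI b (fun c _ => (fam hsep hI c).1)))).2.2
      ((fam hsep hI a).1) ⟨⟨a, hab⟩, rfl⟩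

end Stmt8Aux

end AuxStmt8

/-- every nonseparable Banach space admits a bounded operator into ℓ∞(Γ),
|Γ| = ℵ₁, with nonseparable range. -/
theorem stmt8 (X : Type u) [NormedAddCommGroup X] [NormedSpace ℝ X] [CompleteSpace X]
    (hsep : ¬ TopologicalSpace.SeparableSpace X)
    (Γ : Type v) (hΓ : #Γ = Cardinal.aleph 1) :
    ∃ T : X →L[ℝ] lp (fun _ : Γ => ℝ) ⊤,
      ¬ TopologicalSpace.IsSeparable (Set.range fun x => T x) := by
  classical
  obtain ⟨e⟩ : Nonempty (Γ ≃ (Cardinal.aleph 1 : Cardinal.{v}).ord.ToType) := by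
    apply Cardinal.eq.1
    rw [hΓ, Cardinal.mk_toType, Cardinal.card_ord]
  have hI : ∀ a : (Cardinal.aleph 1 : Cardinal.{v}).ord.ToType, (Set.Iio a).Countable := fun a =>
    (Cardinal.countable_iff_lt_aleph_one _).2 (Cardinal.mk_Iio_ord_toType a)
  obtain ⟨x, f, hf1, hf2, hf0⟩ := Stmt8Aux.exists_fam hsep _ hI
  have hmem : ∀ w : X, Memℓp (fun γ : Γ => f (e γ) w) ⊤ := by
    intro w
    apply memℓp_infty
    refine ⟨‖w‖, ?_⟩
    rintro r ⟨γ, rfl⟩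
    calc ‖f (e γ) w‖ ≤ ‖f (e γ)‖ * ‖w‖ := (f (e γ)).le_opNorm w
      _ ≤ 1 * ‖w‖ := by
        have := hf1 (e γ)
        have := norm_nonneg w
        nlinarith
      _ = ‖w‖ := one_mul _
  let L : X →ₗ[ℝ] lp (fun _ : Γ => ℝ) ⊤ :=
    { toFun := fun w => ⟨fun γ => f (e γ) w, hmem w⟩
      map_add' := fun v w => by
        apply lp.ext
        funext γ
        simp [lp.coeFn_add]
        rfl
      map_smul' := fun t w => by
        apply lp.ext
        funext γ
        simp [lp.coeFn_smul] }
  let T : X →L[ℝ] lp (fun _ : Γ => ℝ) ⊤ := L.mkContinuous 1 (fun w => by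
    apply lp.norm_le_of_forall_le (by positivity)
    intro γ
    show ‖f (e γ) w‖ ≤ 1 * ‖w‖
    calc ‖f (e γ) w‖ ≤ ‖f (e γ)‖ * ‖w‖ := (f (e γ)).le_opNorm w
      _ ≤ 1 * ‖w‖ := by
        have := hf1 (e γ)
        have := norm_nonneg w
        nlinarith)
  refine ⟨T, ?_⟩
  intro hsepR
  have hsub : (Set.range fun a => T (x a)) ⊆ (Set.range fun v => T v) := by
    rintro _ ⟨a, rfl⟩; exact ⟨x a, rfl⟩
  obtain ⟨c, hc, hcc⟩ := hsepR.mono hsub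
  have hd : ∀ a, ∃ z ∈ c, dist (T (x a)) z < 1 := fun a =>
    Metric.mem_closure_iff.1 (hcc ⟨a, rfl⟩) 1 one_pos
  choose d hdc hdist using hd
  have happly : ∀ (w : X) (γ : Γ), (T w : ∀ _ : Γ, ℝ) γ = f (e γ) w := fun w γ => rfl
  have hsep2 : ∀ a b, a < b → (2:ℝ) ≤ dist (T (x a)) (T (x b)) := by
    intro a b hab
    have h1 : ‖(T (x a) - T (x b)) (e.symm b)‖ ≤ ‖T (x a) - T (x b)‖ :=
      lp.norm_apply_le_norm ENNReal.top_ne_zero _ _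
    rw [lp.coeFn_sub, Pi.sub_apply, happly, happly, e.apply_symm_apply,
      hf0 a b hab, hf2 b] at h1
    have h3 : ‖(0:ℝ) - 2‖ = 2 := by norm_num
    rw [h3] at h1
    rw [dist_eq_norm]
    exact h1
  have hinj : Function.Injective d := by
    intro a b hab
    by_contra hne
    rcases (Ne.lt_or_gt hne) with h | h
    · have h4 := hsep2 a b h
      have h5 := dist_triangle (T (x a)) (d a) (T (x b))
      have h6 := hdist a
      have h7 : dist (d a) (T (x b)) < 1 := by rw [hab, dist_comm]; exact hdist b
      linarith
    · have h4 := hsep2 b a h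
      have h5 := dist_triangle (T (x b)) (d b) (T (x a))
      have h6 := hdist b
      have h7 : dist (d b) (T (x a)) < 1 := by rw [← hab, dist_comm]; exact hdist a
      have h8 : dist (T (x b)) (T (x a)) = dist (T (x a)) (T (x b)) := dist_comm _ _
      linarith
  have hcard : #((Cardinal.aleph 1 : Cardinal.{v}).ord.ToType) ≤ #c :=
    Cardinal.mk_le_of_injective (f := fun a => (⟨d a, hdc a⟩ : c))
      (fun a b h => hinj (congrArg Subtype.val h))
  have hle : (Cardinal.aleph 1 : Cardinal.{v}) ≤ ℵ₀ := by
    rw [← Cardinal.card_ord (Cardinal.aleph 1), ← Cardinal.mk_toType]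
    exact hcard.trans (Cardinal.mk_le_aleph0_iff.2 hc.to_subtype)
  exact absurd hle (not_le.2 Cardinal.aleph0_lt_aleph_one)


end
end

section
/- Let X be a nonseparable real Banach space admitting a fundamental biorthogonal system. Then cov(X) = ℵ₁. -/
open Cardinal Set

universe u v

noncomputable section

/-- Baire-category lemma: a Banach space is not the union of countably many hyperplanes. -/
theorem not_countable_hyperplane_cover (X : Type u) [NormedAddCommGroup X] [NormedSpace ℝ X]
    [CompleteSpace X] (G : Set (Set X)) (hG : G.Countable)
    (hhyp : ∀ H ∈ G, ∃ g : X →L[ℝ] ℝ, g ≠ 0 ∧ H = {x | g x = 0}) :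
    ⋃₀ G ≠ Set.univ := by
  intro hcov
  haveI : Nonempty X := ⟨0⟩
  have hne : G.Nonempty := by
    rcases Set.eq_empty_or_nonempty G with rfl | h
    · exfalso
      simp at hcov
      exact (Set.eq_empty_iff_forall_notMem.mp hcov.symm 0) trivial
    · exact h
  obtain ⟨h, rfl⟩ := hG.exists_eq_range hne
  have hclosed : ∀ n, IsClosed (h n) := by
    intro n
    obtain ⟨g, _, hg⟩ := hhyp (h n) ⟨n, rfl⟩
    rw [hg]
    exact isClosed_eq g.continuous continuous_const
  have hU : (⋃ n, h n) = Set.univ := by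
    rw [← Set.sUnion_range]; exact hcov
  obtain ⟨n, hn⟩ := nonempty_interior_of_iUnion_of_closed hclosed hU
  obtain ⟨g, hg0, hg⟩ := hhyp (h n) ⟨n, rfl⟩
  have hker : (LinearMap.ker (g : X →ₗ[ℝ] ℝ) : Set X) = h n := by
    ext z; simp [hg, LinearMap.mem_ker]
  rw [← hker] at hn
  have := Submodule.eq_top_of_nonempty_interior' (LinearMap.ker (g : X →ₗ[ℝ] ℝ)) hn
  apply hg0
  ext z
  have : z ∈ LinearMap.ker (g : X →ₗ[ℝ] ℝ) := this ▸ Submodule.mem_top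
  simpa using this


variable {X : Type u} [NormedAddCommGroup X] [NormedSpace ℝ X]

open Classical in
/-- countable support lemma -/
theorem ctble_support {ι : Type v} (x : ι → X) (f : ι → X →L[ℝ] ℝ)
    (hbi : ∀ i j, f i (x j) = if i = j then 1 else 0)
    (hfund : Submodule.topologicalClosure (Submodule.span ℝ (Set.range x)) = ⊤)
    (y : X) : ∃ c : Set ι, c.Countable ∧ ∀ i ∉ c, f i y = 0 := by
  classical
  have hxinj : Function.Injective x := by
    intro i j hij
    by_contra hne
    have h1 := hbi i j
    rw [if_neg hne, ← hij, hbi i i, if_pos rfl] at h1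
    exact one_ne_zero h1
  have hy : y ∈ closure (Submodule.span ℝ (Set.range x) : Set X) := by
    rw [← Submodule.topologicalClosure_coe, hfund]
    trivial
  obtain ⟨u, hu, hlim⟩ := mem_closure_iff_seq_limit.mp hy
  choose t ht hut using fun n => Submodule.mem_span_finite_of_mem_span (hu n)
  refine ⟨x ⁻¹' (⋃ n, (t n : Set X)), (Set.countable_iUnion fun n => (t n).countable_toSet).preimage hxinj, ?_⟩
  intro i hi
  have hker : ∀ n, u n ∈ LinearMap.ker (f i : X →ₗ[ℝ] ℝ) := by
    intro n
    have : Submodule.span ℝ ((t n : Set X)) ≤ LinearMap.ker (f i : X →ₗ[ℝ] ℝ) := by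
      rw [Submodule.span_le]
      intro z hz
      obtain ⟨j, rfl⟩ := ht n hz
      have hij : i ≠ j := by
        rintro rfl
        exact hi (Set.mem_preimage.mpr (Set.mem_iUnion.mpr ⟨n, hz⟩))
      simpa [LinearMap.mem_ker, hbi i j, hij] using (hbi i j).trans (if_neg hij)
    exact this (hut n)
  have h1 : Filter.Tendsto (fun n => f i (u n)) Filter.atTop (nhds (f i y)) :=
    ((f i).continuous.tendsto y).comp hlim
  have h2 : (fun n => f i (u n)) = fun _ => (0 : ℝ) := by
    funext n; simpa [LinearMap.mem_ker] using hker n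
  rw [h2] at h1
  exact (tendsto_nhds_unique h1 tendsto_const_nhds)



open Classical in
/-- a nonseparable Banach space with a fundamental biorthogonal system
satisfies cov(X) = ℵ₁. -/
theorem stmt10 (X : Type u) [NormedAddCommGroup X] [NormedSpace ℝ X] [CompleteSpace X]
    (hsep : ¬ TopologicalSpace.SeparableSpace X)
    (ι : Type v) (x : ι → X) (f : ι → X →L[ℝ] ℝ)
    (hbi : ∀ i j, f i (x j) = if i = j then 1 else 0)
    (hfund : Submodule.topologicalClosure (Submodule.span ℝ (Set.range x)) = ⊤) :
    covH X = Cardinal.aleph 1 := by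
  classical
  haveI : Nonempty X := ⟨0⟩
  have hfi0 : ∀ i, f i ≠ 0 := by
    intro i h
    have h1 := hbi i i
    rw [if_pos rfl, h] at h1
    simpa using h1.symm
  -- ι is uncountable
  have huncι : ¬ Countable ι := by
    intro h
    apply hsep
    have hc : (Set.range x).Countable := Set.countable_range x
    rw [← TopologicalSpace.isSeparable_univ_iff]
    have h2 := (hc.isSeparable.span (R := ℝ)).closure
    rwa [← Submodule.topologicalClosure_coe, hfund] at h2
  -- the kernel-assigning map
  set g : ι → Set X := fun i => {z | f i z = 0} with hg
  have hginj : Function.Injective g := by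
    intro i j hij
    by_contra hne
    have h1 : x i ∈ g j := by
      simp only [hg, Set.mem_setOf_eq]
      rw [hbi j i, if_neg (fun h => hne h.symm)]
    rw [← hij] at h1
    simp only [hg, Set.mem_setOf_eq] at h1
    rw [hbi i i, if_pos rfl] at h1
    exact one_ne_zero h1
  -- range g is uncountable
  have hRunc : ¬ (Set.range g).Countable := by
    intro h
    apply huncι
    have : Countable (Set.range g) := h
    exact Function.Injective.countable (f := fun i => (⟨g i, Set.mem_range_self i⟩ : Set.range g))
      (fun i j hij => hginj (congrArg Subtype.val hij))
  have hR1 : Cardinal.aleph 1 ≤ #(Set.range g) := by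
    rw [← Cardinal.succ_aleph0]
    apply Order.succ_le_of_lt
    rw [lt_iff_not_ge]
    intro h
    exact hRunc (Cardinal.le_aleph0_iff_set_countable.mp h)
  obtain ⟨F, hFsub, hFcard⟩ := Cardinal.le_mk_iff_exists_subset.mp hR1
  -- F witnesses the covering
  have hmem : Cardinal.aleph 1 ∈
      {c | ∃ F : Set (Set X), (∀ A ∈ F, InHyperplaneIdeal A) ∧ ⋃₀ F = Set.univ ∧ #F = c} := by
    refine ⟨F, ?_, ?_, hFcard⟩
    · intro A hA
      obtain ⟨i, rfl⟩ := hFsub hA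
      exact ⟨{g i}, Set.countable_singleton _, fun H hH => by
        rw [Set.mem_singleton_iff] at hH
        exact hH ▸ ⟨f i, hfi0 i, rfl⟩, by rw [Set.sUnion_singleton]⟩
    · apply Set.eq_univ_iff_forall.mpr
      intro y
      obtain ⟨c, hc, hcy⟩ := ctble_support x f hbi hfund y
      have hFunc : ¬ F.Countable := by
        intro h
        have := Cardinal.le_aleph0_iff_set_countable.mpr h
        rw [hFcard] at this
        exact absurd (lt_of_lt_of_le Cardinal.aleph0_lt_aleph_one this) (lt_irrefl _)
      have : ¬ (F ⊆ g '' c) := by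
        intro h
        exact hFunc (Set.Countable.mono h (hc.image g))
      obtain ⟨A, hAF, hA⟩ := Set.not_subset.mp this
      obtain ⟨i, rfl⟩ := hFsub hAF
      have hic : i ∉ c := fun h => hA ⟨i, h, rfl⟩
      exact ⟨g i, hAF, hcy i hic⟩
  -- lower bound
  have hlb : ∀ c ∈ {c | ∃ F : Set (Set X), (∀ A ∈ F, InHyperplaneIdeal A) ∧ ⋃₀ F = Set.univ ∧ #F = c},
      Cardinal.aleph 1 ≤ c := by
    rintro c ⟨F, hAll, hcov, rfl⟩
    rw [← Cardinal.succ_aleph0]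
    apply Order.succ_le_of_lt
    rw [lt_iff_not_ge]
    intro hle
    have hFc : F.Countable := Cardinal.le_aleph0_iff_set_countable.mp hle
    -- build the countable hyperplane family
    have hchoice : ∀ A : F, ∃ G : Set (Set X), G.Countable ∧ (∀ H ∈ G, IsHyperplane H) ∧
        (A : Set X) ⊆ ⋃₀ G := fun A => hAll A A.2
    choose G hGc hGhyp hGcov using hchoice
    haveI : Countable F := hFc
    have := not_countable_hyperplane_cover X (⋃ A : F, G A)
      (Set.countable_iUnion hGc)
      (by
        intro H hH
        obtain ⟨A, hA⟩ := Set.mem_iUnion.mp hH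
        exact hGhyp A H hA)
    apply this
    apply Set.eq_univ_iff_forall.mpr
    intro y
    have : y ∈ ⋃₀ F := hcov ▸ Set.mem_univ y
    obtain ⟨A, hAF, hyA⟩ := this
    obtain ⟨H, hHG, hyH⟩ := hGcov ⟨A, hAF⟩ hyA
    exact ⟨H, Set.mem_iUnion.mpr ⟨⟨A, hAF⟩, hHG⟩, hyH⟩
  exact le_antisymm (csInf_le' hmem) (le_csInf ⟨_, hmem⟩ hlb)


end
end

section
/- Let K be a compact Hausdorff space. Suppose that for every subset A ⊆ K of cardinality ℵ₁ there is a continuous function f : K → ℝ whose restriction to A is injective. Then K has small diagonal. -/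
open Cardinal Set

universe u v

noncomputable section

/-- if every set of size ℵ₁ in K is injected into ℝ by some continuous
function, then K has small diagonal. -/
theorem stmt12 (K : Type u) [TopologicalSpace K] [CompactSpace K] [T2Space K]
    (h : ∀ A : Set K, #A = Cardinal.aleph 1 → ∃ f : C(K, ℝ), Set.InjOn f A) :
    HasSmallDiagonal K := by
  intro A hA hdiag
  -- K has at least ℵ₁ points
  have hK : Cardinal.aleph 1 ≤ #K := by
    by_contra hlt
    push_neg at hlt
    have h1 : #A ≤ #(K × K) := Cardinal.mk_set_le A
    have h2 : #(K × K) = #K * #K := by rw [Cardinal.mk_prod]; simp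
    have hKle : #K ≤ Cardinal.aleph0 := by
      by_contra hc
      push_neg at hc
      have : Cardinal.aleph 1 ≤ #K := by
        rw [← Cardinal.succ_aleph0]
        exact Order.succ_le_of_lt hc
      exact absurd this (not_le.mpr hlt)
    have : Cardinal.aleph 1 ≤ Cardinal.aleph0 := by
      calc Cardinal.aleph 1 = #A := hA.symm
        _ ≤ #K * #K := h2 ▸ h1
        _ ≤ Cardinal.aleph0 * Cardinal.aleph0 := mul_le_mul' hKle hKle
        _ = Cardinal.aleph0 := by simp
    exact absurd this (not_le.mpr (by simpa using Cardinal.aleph0_lt_aleph_one))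
  obtain ⟨T, hT⟩ := Cardinal.le_mk_iff_exists_set.mp hK
  set S : Set K := Prod.fst '' A ∪ Prod.snd '' A ∪ T with hS
  have hScard : #S = Cardinal.aleph 1 := by
    apply le_antisymm
    · calc #S ≤ #(Prod.fst '' A ∪ Prod.snd '' A : Set K) + #T := Cardinal.mk_union_le _ _
        _ ≤ (#(Prod.fst '' A : Set K) + #(Prod.snd '' A : Set K)) + #T :=
            add_le_add (Cardinal.mk_union_le _ _) le_rfl
        _ ≤ (#A + #A) + #T :=
            add_le_add (add_le_add (Cardinal.mk_image_le) (Cardinal.mk_image_le)) le_rfl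
        _ = (Cardinal.aleph 1 + Cardinal.aleph 1) + Cardinal.aleph 1 := by rw [hA, hT]
        _ = Cardinal.aleph 1 := by simp
    · rw [← hT]
      exact Cardinal.mk_le_mk_of_subset (subset_union_right)
  obtain ⟨f, hf⟩ := h S hScard
  have hpos : ∀ p ∈ A, 0 < |f p.1 - f p.2| := by
    intro p hp
    have hne : p.1 ≠ p.2 := by
      intro he
      have : p ∈ A ∩ Set.diagonal K := ⟨hp, he⟩
      simp [hdiag] at this
    have h1 : p.1 ∈ S := Or.inl (Or.inl ⟨p, hp, rfl⟩)
    have h2 : p.2 ∈ S := Or.inl (Or.inr ⟨p, hp, rfl⟩)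
    have : f p.1 ≠ f p.2 := fun he => hne (hf h1 h2 he)
    simpa [sub_eq_zero] using abs_pos.mpr (sub_ne_zero.mpr this)
  set An : ℕ → Set (K × K) := fun n => {p ∈ A | 1 / (n + 1 : ℝ) ≤ |f p.1 - f p.2|} with hAn
  have hcover : A ⊆ ⋃ n, An n := by
    intro p hp
    obtain ⟨n, hn⟩ := exists_nat_one_div_lt (hpos p hp)
    exact Set.mem_iUnion.mpr ⟨n, hp, le_of_lt hn⟩
  have : ∃ n, ¬ (An n).Countable := by
    by_contra hc
    push_neg at hc
    have : A.Countable := Set.Countable.mono hcover (Set.countable_iUnion hc)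
    have : #A ≤ Cardinal.aleph0 := (Set.countable_coe_iff.mpr this) |> Cardinal.mk_le_aleph0_iff.mpr
    rw [hA] at this
    exact absurd this (not_le.mpr (by simpa using Cardinal.aleph0_lt_aleph_one))
  obtain ⟨n, hn⟩ := this
  refine ⟨An n, fun p hp => hp.1, hn, ?_⟩
  have hcl : IsClosed {p : K × K | 1 / (n + 1 : ℝ) ≤ |f p.1 - f p.2|} := by
    have : Continuous fun p : K × K => |f p.1 - f p.2| :=
      ((f.continuous.comp continuous_fst).sub (f.continuous.comp continuous_snd)).abs
    exact isClosed_le continuous_const this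
  have hsub : closure (An n) ⊆ {p : K × K | 1 / (n + 1 : ℝ) ≤ |f p.1 - f p.2|} :=
    closure_minimal (fun p hp => hp.2) hcl
  ext p
  simp only [Set.mem_inter_iff, Set.mem_empty_iff_false, iff_false, not_and]
  intro hcp hdp
  have := hsub hcp
  have hd : p.1 = p.2 := hdp
  rw [Set.mem_setOf_eq, hd, sub_self, abs_zero] at this
  have : (0:ℝ) < 1 / (n + 1 : ℝ) := by positivity
  linarith [hsub hcp, this]


end
end
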